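/- arXiv:2411.19208 — 2 statements merged into one kernel-verified Lean document; each statement's English description precedes it below -/
import Mathlib

section
/- Let $n, d, p$ be non-negative integers with $0 \le d < n$ and $p \le n-d$. Then for every co-signotope $\tau \in \bar{\mathcal{S}}_p(n,d)$, its p-sequence $(|\mathcal{C}^{\tau}_0|, \dots, |\mathcal{C}^{\tau}_d|)$ is a sparse composition of $p$ of length $d+1$. -/
/-! Common definitions: signotopes and co-signotopes on `[n] = {1, …, n}` (encoded as
`Finset.Icc 1 n` in `ℕ`), sign functions are `Finset ℕ → Bool` (`true` = `+`, `false` = `-`)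
that vanish (are `-`) away from the relevant subsets. -/

open Classical in
/-- The sign function with `+`-set `S` (and `-` elsewhere). -/
noncomputable def ofPlusSet (S : Set (Finset ℕ)) : Finset ℕ → Bool :=
  fun A => if A ∈ S then true else false

/-- Number of sign changes in a list of signs. -/
def signChanges (l : List Bool) : ℕ :=
  ((l.zip l.tail).filter fun p => p.1 ≠ p.2).length

/-- Number of `+`-subsets of a sign function. -/
noncomputable def plusCount (τ : Finset ℕ → Bool) : ℕ :=
  {A : Finset ℕ | τ A = true}.ncard

/-- The series of signs `τ (C ∪ {x})` for `x ∈ [n] \ C` in increasing order.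
For a `d`-subset `B` with `i`-th smallest element `b`, `series n τ (B.erase b)` is
the `(τ,B,i)`-series. -/
def series (n : ℕ) (τ : Finset ℕ → Bool) (C : Finset ℕ) : List Bool :=
  ((Finset.Icc 1 n \ C).sort (· ≤ ·)).map fun x => τ (insert x C)

/-- An `r`-signotope on `[n]`, encoded as a sign function on all of `Finset ℕ`
which is `-` away from the `r`-subsets of `[n]`. -/
def IsSignotope (n r : ℕ) (σ : Finset ℕ → Bool) : Prop :=
  (∀ A, σ A = true → A ⊆ Finset.Icc 1 n ∧ A.card = r) ∧
  ∀ X : Finset ℕ, X ⊆ Finset.Icc 1 n → X.card = r + 1 →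
    signChanges ((X.sort (· ≤ ·)).map fun x => σ (X.erase x)) ≤ 1

/-- A `d`-co-signotope on `[n]`: every `(τ,B,i)`-series has at most one sign change. -/
def IsCoSignotope (n d : ℕ) (τ : Finset ℕ → Bool) : Prop :=
  (∀ A, τ A = true → A ⊆ Finset.Icc 1 n ∧ A.card = d) ∧
  ∀ B : Finset ℕ, B ⊆ Finset.Icc 1 n → B.card = d → ∀ b ∈ B,
    signChanges (series n τ (B.erase b)) ≤ 1

/-- `𝒮_p(n,r)`: `r`-signotopes on `[n]` with exactly `p` `+`-signs. -/
noncomputable def sigSet (n r p : ℕ) : Set (Finset ℕ → Bool) :=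
  {σ | IsSignotope n r σ ∧ plusCount σ = p}

/-- `𝒮_{≤p}(n,r)`. -/
noncomputable def sigSetLe (n r p : ℕ) : Set (Finset ℕ → Bool) :=
  {σ | IsSignotope n r σ ∧ plusCount σ ≤ p}

/-- `𝒮̄_p(n,d)`: `d`-co-signotopes on `[n]` with exactly `p` `+`-subsets. -/
noncomputable def coSigSet (n d p : ℕ) : Set (Finset ℕ → Bool) :=
  {τ | IsCoSignotope n d τ ∧ plusCount τ = p}

/-- `𝒮̄_{≤p}(n,d)`. -/
noncomputable def coSigSetLe (n d p : ℕ) : Set (Finset ℕ → Bool) :=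
  {τ | IsCoSignotope n d τ ∧ plusCount τ ≤ p}

/-- `σ` and `τ` differ by a single step: `σ⁻¹(+) ⊊ τ⁻¹(+)` and `|τ⁻¹(+)| = |σ⁻¹(+)| + 1`. -/
noncomputable def SingleStep (σ τ : Finset ℕ → Bool) : Prop :=
  {A | σ A = true} ⊂ {A | τ A = true} ∧ plusCount τ = plusCount σ + 1

/-- The higher Bruhat order on `r`-signotopes on `[n]`: reflexive-transitive closure of
the single step relation. -/
noncomputable def BruhatLe (n r : ℕ) (σ τ : Finset ℕ → Bool) : Prop :=
  Relation.ReflTransGen (fun a b => IsSignotope n r a ∧ IsSignotope n r b ∧ SingleStep a b) σ τ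

/-- The complementary higher Bruhat order on `d`-co-signotopes on `[n]`. -/
noncomputable def CoBruhatLe (n d : ℕ) (σ τ : Finset ℕ → Bool) : Prop :=
  Relation.ReflTransGen (fun a b => IsCoSignotope n d a ∧ IsCoSignotope n d b ∧ SingleStep a b) σ τ

/-- Adjacency in the graph `G_{n,d}`: `B' = (B \ {x}) ∪ {y}` with no element of `B \ {x}`
strictly between `x` and `y`. -/
def GAdj (n d : ℕ) (B B' : Finset ℕ) : Prop :=
  B ⊆ Finset.Icc 1 n ∧ B.card = d ∧ B' ⊆ Finset.Icc 1 n ∧ B'.card = d ∧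
  ∃ x ∈ B, ∃ y ∈ Finset.Icc 1 n, y ∉ B ∧ B' = insert y (B.erase x) ∧
    ∀ z ∈ B.erase x, ¬(min x y < z ∧ z < max x y)

/-- The source subset `S_{n,d,i} = {1,…,i} ∪ {n-d+i+1,…,n}`. -/
def sourceSubset (n d i : ℕ) : Finset ℕ :=
  Finset.Icc 1 i ∪ Finset.Icc (n - d + i + 1) n

/-- Connectivity inside the `+`-subsets of `τ` (the induced subgraph `G_{n,d}[τ]`). -/
def plusConn (n d : ℕ) (τ : Finset ℕ → Bool) : Finset ℕ → Finset ℕ → Prop :=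
  Relation.ReflTransGen fun A A' => τ A = true ∧ τ A' = true ∧ GAdj n d A A'

/-- The vertex set `𝒞^τ_i` of the `+`-component of `τ` containing `S_{n,d,i}`
(empty if `S_{n,d,i}` is not a `+`-subset). -/
def comp (n d : ℕ) (τ : Finset ℕ → Bool) (i : ℕ) : Set (Finset ℕ) :=
  {B | τ (sourceSubset n d i) = true ∧ τ B = true ∧ plusConn n d τ (sourceSubset n d i) B}

/-- The `j`-th smallest element (1-based) of a finite set of naturals. -/
def nthElt (B : Finset ℕ) (j : ℕ) : ℕ := (B.sort (· ≤ ·)).getD (j - 1) 0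

/-- `b_j` with the conventions `b_0 = 0` and `b_{d+1} = n+1` (as an integer). -/
def extNth (n d : ℕ) (B : Finset ℕ) (j : ℕ) : ℤ :=
  if j = 0 then 0 else if j ≤ d then (nthElt B j : ℤ) else (n : ℤ) + 1

/-- A series is left-aligned if it starts with `+` and ends with `-`. -/
def LeftAligned (l : List Bool) : Prop :=
  l.head? = some true ∧ l.getLast? = some false

/-- A series is right-aligned if it starts with `-` and ends with `+`. -/
def RightAligned (l : List Bool) : Prop :=
  l.head? = some false ∧ l.getLast? = some true

/-- `𝒮̄_{p,i}(n,d)`: co-signotopes in `𝒮̄_p(n,d)` whose only nonempty `+`-component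
is `𝒞^τ_i` (i.e. every `+`-subset lies in `𝒞^τ_i`). -/
noncomputable def coSigOnly (n d p i : ℕ) : Set (Finset ℕ → Bool) :=
  {τ | IsCoSignotope n d τ ∧ plusCount τ = p ∧ ∀ B, τ B = true → B ∈ comp n d τ i}

/-- `Z(d,i)`: points `(a_1,…,a_d) ∈ ℤ_{>0}^d` (0-indexed in Lean) with `a_j ≥ a_{j-1}`
for `j ∈ [2,i]` and `a_j ≥ a_{j+1}` for `j ∈ [i+1,d-1]` (1-based indices). -/
def ZSet (d i : ℕ) : Set (Fin d → ℤ) :=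
  {a | (∀ j, 0 < a j) ∧
    (∀ j k : Fin d, (j : ℕ) + 1 = (k : ℕ) → (k : ℕ) + 1 ≤ i → a j ≤ a k) ∧
    (∀ j k : Fin d, (j : ℕ) + 1 = (k : ℕ) → i ≤ (j : ℕ) → a k ≤ a j)}

/-- A `(d,i)`-Ferrers diagram with respect to `p`. -/
def IsFerrers (d i p : ℕ) (F : Set (Fin d → ℤ)) : Prop :=
  F ⊆ ZSet d i ∧ F.ncard = p ∧
  ∀ a ∈ F, ∀ a' ∈ ZSet d i, (∀ j, a' j ≤ a j) → a' ∈ F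

/-- The number of `(d,i)`-Ferrers diagrams with respect to `p`. -/
noncomputable def ferrersCount (d i p : ℕ) : ℕ :=
  {F : Set (Fin d → ℤ) | IsFerrers d i p F}.ncard

/-- `f_{n,d,i,j}` (here `j` is the 1-based coordinate index). -/
def fFun (n d i j : ℕ) (x : ℕ) : ℤ :=
  if j ≤ i then (x : ℤ) - j + 1 else ((n : ℤ) - x) - ((d : ℤ) - j) + 1

/-- `g_{n,d,i}` maps a `d`-subset `B = (b_1 < … < b_d)` to
`(f_{n,d,i,1}(b_1), …, f_{n,d,i,d}(b_d))`. -/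
def gMap (n d i : ℕ) (B : Finset ℕ) : Fin d → ℤ :=
  fun k => fFun n d i ((k : ℕ) + 1) (nthElt B ((k : ℕ) + 1))

/-- A sparse composition of `p` of length `d+1`. -/
def IsSparseComposition (d p : ℕ) (c : Fin (d + 1) → ℕ) : Prop :=
  (∑ i, c i) = p ∧
  ∀ i : Fin (d + 1), 1 ≤ (i : ℕ) →
    c i = 0 ∨ c ⟨(i : ℕ) - 1, lt_of_le_of_lt (Nat.sub_le _ _) i.isLt⟩ = 0

/-- The component `τ_i` of the `+`-component decomposition `Δ(τ)`:
the sign function whose `+`-set is `𝒞^τ_i`. -/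
noncomputable def compFun (n d : ℕ) (τ : Finset ℕ → Bool) (i : ℕ) : Finset ℕ → Bool :=
  ofPlusSet (comp n d τ i)

/-- Keep the `i` smallest elements of `B` and shift the others by `ñ - n`
(this is `g⁻¹_{ñ,d,i} ∘ g_{n,d,i}` on `d`-subsets). -/
def gammaSet (n tn i : ℕ) (B : Finset ℕ) : Finset ℕ :=
  ((B.sort (· ≤ ·)).mapIdx fun k x => if k < i then x else x + tn - n).toFinset

/-- The map `h_{n,ñ,d,p,i}` on sign functions. -/
noncomputable def hFun (n tn i : ℕ) (τ : Finset ℕ → Bool) : Finset ℕ → Bool :=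
  ofPlusSet {A | ∃ B, τ B = true ∧ A = gammaSet n tn i B}

open Classical in
/-- `γ_{τ,ñ}(B)`: replace `b_j` by `b_j + ñ - n` whenever the `(τ,B,j)`-series is
right-aligned. -/
noncomputable def gammaFun (n tn : ℕ) (τ : Finset ℕ → Bool) (B : Finset ℕ) : Finset ℕ :=
  B.image fun x => if RightAligned (series n τ (B.erase x)) then x + tn - n else x

/-- The simple bijection `φ_{n,ñ,d,p}` on sign functions. -/
noncomputable def phiFun (n tn : ℕ) (τ : Finset ℕ → Bool) : Finset ℕ → Bool :=
  ofPlusSet {A | ∃ B, τ B = true ∧ A = gammaFun n tn τ B}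

lemma two_le_length_filter {α : Type*} (p : α → Bool) :
    ∀ (L : List α) (m₁ m₂ : ℕ) (h₁₂ : m₁ < m₂) (h₂ : m₂ < L.length),
    p (L[m₁]'(lt_trans h₁₂ h₂)) = true → p (L[m₂]'h₂) = true →
    2 ≤ (L.filter p).length := by
  intro L
  induction L with
  | nil => intro m₁ m₂ h h₂; simp at h₂
  | cons a t ih =>
    intro m₁ m₂ h h₂ p₁ p₂
    match m₂, h₂ with
    | m₂ + 1, h₂ =>
      have hm2 : m₂ < t.length := by simpa using h₂
      have p₂' : p t[m₂] = true := p₂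
      match m₁, h with
      | 0, _ =>
        have p₁' : p a = true := p₁
        have hmem : t[m₂] ∈ t.filter p := List.mem_filter.2 ⟨List.getElem_mem _, p₂'⟩
        have h1 : 0 < (t.filter p).length := List.length_pos_iff.2 (fun he => by simp [he] at hmem)
        simp only [List.filter_cons, p₁', if_true, List.length_cons]
        omega
      | m₁ + 1, h =>
        have := ih m₁ m₂ (by omega) hm2 p₁ p₂'
        calc 2 ≤ (t.filter p).length := this
          _ ≤ ((a :: t).filter p).length := by
              simp only [List.filter_cons]; split <;> simp


lemma exists_change : ∀ (k : ℕ) (l : List Bool) (i j : ℕ) (hij : i < j) (hj : j < l.length),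
    j - i ≤ k → l[i]'(lt_trans (by omega) hj) ≠ l[j]'hj →
    ∃ m, i ≤ m ∧ m + 1 ≤ j ∧ ∃ (hm : m + 1 < l.length),
      l[m]'(by omega) ≠ l[m+1]'hm := by
  intro k
  induction k with
  | zero => intro l i j hij hj hk; omega
  | succ k ih =>
    intro l i j hij hj hk hne
    by_cases hij1 : j = i + 1
    · subst hij1; exact ⟨i, le_refl _, le_refl _, hj, hne⟩
    · by_cases hmid : l[i]'(lt_trans hij hj) = l[i+1]'(by omega)
      · obtain ⟨m, hm1, hm2, hm3, hm4⟩ := ih l (i+1) j (by omega) hj (by omega)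
          (by rw [← hmid]; exact hne)
        exact ⟨m, by omega, hm2, hm3, hm4⟩
      · exact ⟨i, le_refl _, by omega, by omega, hmid⟩

lemma sc_two (l : List Bool) (i j k : ℕ) (hij : i < j) (hjk : j < k) (hk : k < l.length)
    (h1 : l[i]'(by omega) ≠ l[j]'(by omega)) (h2 : l[j]'(by omega) ≠ l[k]'hk) :
    2 ≤ signChanges l := by
  obtain ⟨m₁, a1, a2, a3, a4⟩ := exists_change (j - i) l i j hij (by omega) (le_refl _) h1
  obtain ⟨m₂, b1, b2, b3, b4⟩ := exists_change (k - j) l j k hjk hk (le_refl _) h2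
  have hzl : (l.zip l.tail).length = l.length - 1 := by
    rw [List.length_zip, List.length_tail]; omega
  have hm12 : m₁ < m₂ := by omega
  have hm2' : m₂ < (l.zip l.tail).length := by omega
  have key : ∀ (m : ℕ) (hm : m < (l.zip l.tail).length),
      (l.zip l.tail)[m]'hm = (l[m]'(by omega), l[m+1]'(by omega)) := by
    intro m hm
    rw [List.getElem_zip, List.getElem_tail]
  unfold signChanges
  apply two_le_length_filter _ (l.zip l.tail) m₁ m₂ hm12 hm2'
  · rw [key m₁ (by omega)]; simpa using a4
  · rw [key m₂ hm2']; simpa using b4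

open Finset

lemma idx_lt {s : Finset ℕ} {x y : ℕ} (hx : x ∈ s) (hy : y ∈ s) (hxy : x < y) :
    (s.sort (· ≤ ·)).idxOf x < (s.sort (· ≤ ·)).idxOf y := by
  set L := s.sort (· ≤ ·) with hL
  have hxL : x ∈ L := (Finset.mem_sort _).2 hx
  have hyL : y ∈ L := (Finset.mem_sort _).2 hy
  have hix : L.idxOf x < L.length := List.idxOf_lt_length_iff.2 hxL
  have hiy : L.idxOf y < L.length := List.idxOf_lt_length_iff.2 hyL
  have hmono : StrictMono L.get := (Finset.sortedLT_sort s).strictMono_get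
  rcases lt_trichotomy (L.idxOf x) (L.idxOf y) with h | h | h
  · exact h
  · exfalso
    have : x = y := by
      have h1 := List.getElem_idxOf hix
      have h2 := List.getElem_idxOf hiy
      rw [← h1, ← h2]
      congr 1
    omega
  · exfalso
    have : y < x := by
      have hgx := List.getElem_idxOf hix
      have hgy := List.getElem_idxOf hiy
      have := hmono (a := ⟨L.idxOf y, hiy⟩) (b := ⟨L.idxOf x, hix⟩) h
      simpa [List.get_eq_getElem, hgx, hgy] using this
    omega

lemma series_getElem (n : ℕ) (τ : Finset ℕ → Bool) (C : Finset ℕ) {x : ℕ}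
    (hx : x ∈ Finset.Icc 1 n \ C) :
    ∃ (h : ((Finset.Icc 1 n \ C).sort (· ≤ ·)).idxOf x < (series n τ C).length),
      (series n τ C)[((Finset.Icc 1 n \ C).sort (· ≤ ·)).idxOf x]'h = τ (insert x C) := by
  set L := (Finset.Icc 1 n \ C).sort (· ≤ ·) with hL
  have hxL : x ∈ L := (Finset.mem_sort _).2 hx
  have hix : L.idxOf x < L.length := List.idxOf_lt_length_iff.2 hxL
  have hlen : (series n τ C).length = L.length := by
    simp only [series, List.length_map, hL]
  refine ⟨by omega, ?_⟩
  have : (series n τ C)[L.idxOf x]'(by omega) = τ (insert (L[L.idxOf x]'hix) C) := by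
    simp only [series, ← hL]
    rw [List.getElem_map]
  rw [this, List.getElem_idxOf hix]

lemma no_alt {n : ℕ} {τ : Finset ℕ → Bool} {C : Finset ℕ}
    (hsc : signChanges (series n τ C) ≤ 1)
    {x y z : ℕ} (hx : x ∈ Finset.Icc 1 n \ C) (hy : y ∈ Finset.Icc 1 n \ C)
    (hz : z ∈ Finset.Icc 1 n \ C) (hxy : x < y) (hyz : y < z)
    (hxz : τ (insert x C) = τ (insert z C)) : τ (insert y C) = τ (insert x C) := by
  by_contra hne
  obtain ⟨hix, hgx⟩ := series_getElem n τ C hx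
  obtain ⟨hiy, hgy⟩ := series_getElem n τ C hy
  obtain ⟨hiz, hgz⟩ := series_getElem n τ C hz
  have h12 := idx_lt (s := Finset.Icc 1 n \ C) (Finset.mem_sdiff.1 hx |> fun h => hx) hy hxy
  have h23 := idx_lt (s := Finset.Icc 1 n \ C) hy hz hyz
  have := sc_two (series n τ C) _ _ _ h12 h23 hiz
    (by rw [hgx, hgy]; exact fun h => hne h.symm)
    (by rw [hgy, hgz, ← hxz]; exact fun h => hne h)
  omega

lemma plusCount_eq_card {n d : ℕ} {τ : Finset ℕ → Bool}
    (hτ1 : ∀ A, τ A = true → A ⊆ Finset.Icc 1 n ∧ A.card = d) :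
    plusCount τ = (((Finset.Icc 1 n).powerset).filter fun A => τ A = true).card := by
  unfold plusCount
  have : {A : Finset ℕ | τ A = true}
      = ↑(((Finset.Icc 1 n).powerset).filter fun A => τ A = true) := by
    ext A
    simp only [Finset.coe_filter, Finset.mem_powerset, Set.mem_setOf_eq]
    exact ⟨fun h => ⟨(hτ1 A h).1, h⟩, fun h => h.2⟩
  rw [this, Set.ncard_coe_finset]

lemma card_le_p {n d p : ℕ} {τ : Finset ℕ → Bool}
    (hτ : IsCoSignotope n d τ) (hpc : plusCount τ = p)
    {C S : Finset ℕ} (hSC : ∀ x ∈ S, x ∉ C) (hplus : ∀ x ∈ S, τ (insert x C) = true) :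
    S.card ≤ p := by
  classical
  set T := ((Finset.Icc 1 n).powerset).filter (fun A => τ A = true) with hTdef
  have hT : T.card = p := by rw [← plusCount_eq_card hτ.1, hpc]
  have himg : S.image (fun x => insert x C) ⊆ T := by
    intro A hA
    obtain ⟨x, hxS, rfl⟩ := Finset.mem_image.1 hA
    simp only [hTdef, Finset.mem_filter, Finset.mem_powerset]
    exact ⟨(hτ.1 _ (hplus x hxS)).1, hplus x hxS⟩
  have hinj : Set.InjOn (fun x => insert x C) S := by
    intro a ha b hb hab
    by_contra hne
    simp only at hab
    have : a ∈ insert b C := hab ▸ Finset.mem_insert_self a C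
    rcases Finset.mem_insert.1 this with h | h
    · exact hne h
    · exact hSC a ha h
  calc S.card = (S.image (fun x => insert x C)).card :=
        (Finset.card_image_of_injOn hinj).symm
    _ ≤ T.card := Finset.card_le_card himg
    _ = p := hT

lemma card_pair_le_p {n d p : ℕ} {τ : Finset ℕ → Bool}
    (hτ : IsCoSignotope n d τ) (hpc : plusCount τ = p)
    {C C' S S' B₀ : Finset ℕ}
    (hSC : ∀ x ∈ S, x ∉ C) (hSC' : ∀ x ∈ S', x ∉ C')
    (hplus : ∀ x ∈ S, τ (insert x C) = true) (hplus' : ∀ x ∈ S', τ (insert x C') = true)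
    (hover : ∀ x ∈ S, ∀ y ∈ S', insert x C = insert y C' → insert x C = B₀) :
    S.card + S'.card ≤ p + 1 := by
  classical
  set T := ((Finset.Icc 1 n).powerset).filter (fun A => τ A = true) with hTdef
  have hT : T.card = p := by rw [← plusCount_eq_card hτ.1, hpc]
  set F := S.image (fun x => insert x C) with hF
  set F' := S'.image (fun y => insert y C') with hF'
  have hFT : F ⊆ T := by
    intro A hA
    obtain ⟨x, hxS, rfl⟩ := Finset.mem_image.1 hA
    simp only [hTdef, Finset.mem_filter, Finset.mem_powerset]
    exact ⟨(hτ.1 _ (hplus x hxS)).1, hplus x hxS⟩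
  have hFT' : F' ⊆ T := by
    intro A hA
    obtain ⟨y, hyS, rfl⟩ := Finset.mem_image.1 hA
    simp only [hTdef, Finset.mem_filter, Finset.mem_powerset]
    exact ⟨(hτ.1 _ (hplus' y hyS)).1, hplus' y hyS⟩
  have hinter : F ∩ F' ⊆ {B₀} := by
    intro A hA
    obtain ⟨hA1, hA2⟩ := Finset.mem_inter.1 hA
    obtain ⟨x, hxS, rfl⟩ := Finset.mem_image.1 hA1
    obtain ⟨y, hyS, he⟩ := Finset.mem_image.1 hA2
    have := hover x hxS y hyS he.symm
    simp [this]
  have hinj : Set.InjOn (fun x => insert x C) S := by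
    intro a ha b hb hab
    by_contra hne
    simp only at hab
    have : a ∈ insert b C := hab ▸ Finset.mem_insert_self a C
    rcases Finset.mem_insert.1 this with h | h
    · exact hne h
    · exact hSC a ha h
  have hinj' : Set.InjOn (fun y => insert y C') S' := by
    intro a ha b hb hab
    by_contra hne
    simp only at hab
    have : a ∈ insert b C' := hab ▸ Finset.mem_insert_self a C'
    rcases Finset.mem_insert.1 this with h | h
    · exact hne h
    · exact hSC' a ha h
  have h1 : F.card = S.card := Finset.card_image_of_injOn hinj
  have h2 : F'.card = S'.card := Finset.card_image_of_injOn hinj'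
  have h3 : (F ∪ F').card + (F ∩ F').card = F.card + F'.card :=
    Finset.card_union_add_card_inter F F'
  have h4 : (F ∪ F').card ≤ p := hT ▸ Finset.card_le_card (Finset.union_subset hFT hFT')
  have h5 : (F ∩ F').card ≤ 1 := by
    calc (F ∩ F').card ≤ ({B₀} : Finset (Finset ℕ)).card := Finset.card_le_card hinter
      _ = 1 := Finset.card_singleton _
  omega

def mC (n : ℕ) (C : Finset ℕ) : ℕ := WithTop.untopD 0 (Finset.Icc 1 n \ C).min

def IsL (n : ℕ) (τ : Finset ℕ → Bool) (B : Finset ℕ) (b : ℕ) : Prop :=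
  τ (insert (mC n (B.erase b)) (B.erase b)) = true

instance (n : ℕ) (τ : Finset ℕ → Bool) (B : Finset ℕ) : DecidablePred (IsL n τ B) :=
  fun _ => inferInstanceAs (Decidable (_ = true))

def typeOf (n : ℕ) (τ : Finset ℕ → Bool) (B : Finset ℕ) : ℕ :=
  (B.filter fun b => IsL n τ B b).card

lemma mC_eq_min' {n : ℕ} {C : Finset ℕ} (h : (Finset.Icc 1 n \ C).Nonempty) :
    mC n C = (Finset.Icc 1 n \ C).min' h := by
  unfold mC
  rw [← Finset.coe_min' h]
  rfl

lemma mC_mem {n : ℕ} {C : Finset ℕ} (h : (Finset.Icc 1 n \ C).Nonempty) :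
    mC n C ∈ Finset.Icc 1 n \ C := by
  rw [mC_eq_min' h]; exact Finset.min'_mem _ h

lemma mC_le {n : ℕ} {C : Finset ℕ} {x : ℕ} (hx : x ∈ Finset.Icc 1 n \ C) :
    mC n C ≤ x := by
  rw [mC_eq_min' ⟨x, hx⟩]; exact Finset.min'_le _ x hx

lemma mem_compl_self {n : ℕ} {B : Finset ℕ} {b : ℕ} (hB : B ⊆ Finset.Icc 1 n) (hb : b ∈ B) :
    b ∈ Finset.Icc 1 n \ B.erase b := by
  rw [Finset.mem_sdiff]
  exact ⟨hB hb, fun h => (Finset.mem_erase.1 h).1 rfl⟩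

lemma F1 {n d : ℕ} {τ : Finset ℕ → Bool} (hτ : IsCoSignotope n d τ) {B : Finset ℕ} {b : ℕ}
    (hB : τ B = true) (hb : b ∈ B) (hL : IsL n τ B b)
    {x : ℕ} (hx : x ∈ Finset.Icc 1 n \ B.erase b) (hxb : x ≤ b) :
    τ (insert x (B.erase b)) = true := by
  obtain ⟨hBI, hBc⟩ := hτ.1 B hB
  have hsc := hτ.2 B hBI hBc b hb
  have hbC : b ∈ Finset.Icc 1 n \ B.erase b := mem_compl_self hBI hb
  have hm : mC n (B.erase b) ∈ Finset.Icc 1 n \ B.erase b := mC_mem ⟨b, hbC⟩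
  have hmx : mC n (B.erase b) ≤ x := mC_le hx
  have hins : insert b (B.erase b) = B := Finset.insert_erase hb
  rcases eq_or_lt_of_le hmx with he | hlt
  · rw [← he]; exact hL
  rcases eq_or_lt_of_le hxb with he | hxb'
  · rw [he, hins]; exact hB
  have := no_alt hsc hm hx hbC hlt hxb' (by rw [hins, hB]; exact hL)
  rw [this]; exact hL

lemma F2 {n d : ℕ} {τ : Finset ℕ → Bool} (hτ : IsCoSignotope n d τ) {B : Finset ℕ} {b : ℕ}
    (hB : τ B = true) (hb : b ∈ B) (hL : ¬ IsL n τ B b)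
    {x : ℕ} (hx : x ∈ Finset.Icc 1 n \ B.erase b) (hbx : b ≤ x) :
    τ (insert x (B.erase b)) = true := by
  obtain ⟨hBI, hBc⟩ := hτ.1 B hB
  have hsc := hτ.2 B hBI hBc b hb
  have hbC : b ∈ Finset.Icc 1 n \ B.erase b := mem_compl_self hBI hb
  have hm : mC n (B.erase b) ∈ Finset.Icc 1 n \ B.erase b := mC_mem ⟨b, hbC⟩
  have hmf : τ (insert (mC n (B.erase b)) (B.erase b)) = false :=
    Bool.not_eq_true _ ▸ hL
  have hins : insert b (B.erase b) = B := Finset.insert_erase hb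
  have hmb : mC n (B.erase b) < b := by
    rcases eq_or_lt_of_le (mC_le hbC) with he | h
    · exfalso; apply hL; unfold IsL; rw [he, hins]; exact hB
    · exact h
  rcases eq_or_lt_of_le hbx with he | hbx'
  · rw [← he, hins]; exact hB
  by_contra hfx
  have hfx' : τ (insert x (B.erase b)) = false := Bool.not_eq_true _ ▸ hfx
  have := no_alt hsc hm hbC hx hmb hbx' (by rw [hmf, hfx'])
  rw [hins, hB, hmf] at this
  exact Bool.noConfusion this


lemma inter_Icc_lo {n : ℕ} {B : Finset ℕ} (hB : B ⊆ Finset.Icc 1 n) {b : ℕ} :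
    Finset.Icc 1 b ∩ B.erase b = B.filter (· < b) := by
  ext x
  simp only [Finset.mem_inter, Finset.mem_Icc, Finset.mem_erase, Finset.mem_filter]
  constructor
  · rintro ⟨⟨h1, h2⟩, h3, h4⟩; exact ⟨h4, lt_of_le_of_ne h2 h3⟩
  · rintro ⟨h1, h2⟩
    have := Finset.mem_Icc.1 (hB h1)
    exact ⟨⟨this.1, le_of_lt h2⟩, ne_of_lt h2, h1⟩

lemma inter_Icc_hi {n : ℕ} {B : Finset ℕ} (hB : B ⊆ Finset.Icc 1 n) {b : ℕ} :
    Finset.Icc b n ∩ B.erase b = B.filter (b < ·) := by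
  ext x
  simp only [Finset.mem_inter, Finset.mem_Icc, Finset.mem_erase, Finset.mem_filter]
  constructor
  · rintro ⟨⟨h1, h2⟩, h3, h4⟩; exact ⟨h4, lt_of_le_of_ne h1 (Ne.symm h3)⟩
  · rintro ⟨h1, h2⟩
    have := Finset.mem_Icc.1 (hB h1)
    exact ⟨⟨le_of_lt h2, this.2⟩, (ne_of_lt h2).symm, h1⟩

lemma rank_sum {B : Finset ℕ} {b : ℕ} (hb : b ∈ B) :
    (B.filter (· < b)).card + (B.filter (b < ·)).card + 1 = B.card := by
  classical
  have h1 := Finset.card_filter_add_card_filter_not (s := B) (p := (· < b))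
  have h2 : B.filter (fun a => ¬ a < b) = insert b (B.filter (b < ·)) := by
    ext x
    simp only [Finset.mem_filter, Finset.mem_insert, not_lt]
    constructor
    · rintro ⟨h3, h4⟩
      rcases eq_or_lt_of_le h4 with h | h
      · exact Or.inl h.symm
      · exact Or.inr ⟨h3, h⟩
    · rintro (rfl | ⟨h3, h4⟩)
      · exact ⟨hb, le_refl _⟩
      · exact ⟨h3, le_of_lt h4⟩
  have h3 : b ∉ B.filter (b < ·) := by simp
  rw [h2, Finset.card_insert_of_notMem h3] at h1
  omega

lemma F3 {n d p : ℕ} {τ : Finset ℕ → Bool} (hτ : IsCoSignotope n d τ)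
    (hpc : plusCount τ = p) (hp : p + d ≤ n)
    {B : Finset ℕ} (hB : τ B = true) {b b' : ℕ} (hb : b ∈ B) (hb' : b' ∈ B) (hbb' : b < b')
    (hL' : IsL n τ B b') : IsL n τ B b := by
  classical
  by_contra hL
  obtain ⟨hBI, hBc⟩ := hτ.1 B hB
  have hbI := Finset.mem_Icc.1 (hBI hb)
  have hbI' := Finset.mem_Icc.1 (hBI hb')
  set S := Finset.Icc b n \ B.erase b with hS
  set S' := Finset.Icc 1 b' \ B.erase b' with hS'
  have hSsub : ∀ x ∈ S, x ∈ Finset.Icc 1 n \ B.erase b ∧ b ≤ x := by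
    intro x hx
    obtain ⟨hx1, hx2⟩ := Finset.mem_sdiff.1 hx
    obtain ⟨hx3, hx4⟩ := Finset.mem_Icc.1 hx1
    exact ⟨Finset.mem_sdiff.2 ⟨Finset.mem_Icc.2 ⟨le_trans hbI.1 hx3, hx4⟩, hx2⟩, hx3⟩
  have hS'sub : ∀ x ∈ S', x ∈ Finset.Icc 1 n \ B.erase b' ∧ x ≤ b' := by
    intro x hx
    obtain ⟨hx1, hx2⟩ := Finset.mem_sdiff.1 hx
    obtain ⟨hx3, hx4⟩ := Finset.mem_Icc.1 hx1
    exact ⟨Finset.mem_sdiff.2 ⟨Finset.mem_Icc.2 ⟨hx3, le_trans hx4 hbI'.2⟩, hx2⟩, hx4⟩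
  have hplus : ∀ x ∈ S, τ (insert x (B.erase b)) = true := fun x hx =>
    F2 hτ hB hb hL (hSsub x hx).1 (hSsub x hx).2
  have hplus' : ∀ x ∈ S', τ (insert x (B.erase b')) = true := fun x hx =>
    F1 hτ hB hb' hL' (hS'sub x hx).1 (hS'sub x hx).2
  have hover : ∀ x ∈ S, ∀ y ∈ S', insert x (B.erase b) = insert y (B.erase b')
      → insert x (B.erase b) = B := by
    intro x hx y hy he
    have hb'mem : b' ∈ insert x (B.erase b) :=
      Finset.mem_insert_of_mem (Finset.mem_erase.2 ⟨(ne_of_lt hbb').symm, hb'⟩)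
    rw [he] at hb'mem
    rcases Finset.mem_insert.1 hb'mem with h | h
    · rw [he, ← h, Finset.insert_erase hb']
    · exact absurd rfl (Finset.mem_erase.1 h).1
  have hcount := card_pair_le_p hτ hpc
    (fun x hx => (Finset.mem_sdiff.1 ((hSsub x hx).1)).2)
    (fun x hx => (Finset.mem_sdiff.1 ((hS'sub x hx).1)).2)
    hplus hplus' hover
  -- cardinalities
  have e1 : S.card + (Finset.Icc b n ∩ B.erase b).card = (Finset.Icc b n).card :=
    Finset.card_sdiff_add_card_inter _ _
  have e2 : S'.card + (Finset.Icc 1 b' ∩ B.erase b').card = (Finset.Icc 1 b').card :=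
    Finset.card_sdiff_add_card_inter _ _
  rw [inter_Icc_hi hBI] at e1
  rw [inter_Icc_lo hBI] at e2
  rw [Nat.card_Icc] at e1 e2
  set r1 := (B.filter (b < ·)).card
  set r2 := (B.filter (· < b')).card
  have hun : B.filter (b < ·) ∪ B.filter (· < b') = B := by
    ext x
    simp only [Finset.mem_union, Finset.mem_filter]
    constructor
    · rintro (⟨h, _⟩ | ⟨h, _⟩) <;> exact h
    · intro h
      rcases lt_or_ge b x with h2 | h2
      · exact Or.inl ⟨h, h2⟩
      · exact Or.inr ⟨h, lt_of_le_of_lt h2 hbb'⟩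
  have hin : B.filter (b < ·) ∩ B.filter (· < b') ⊆ Finset.Ioo b b' := by
    intro x hx
    obtain ⟨h1, h2⟩ := Finset.mem_inter.1 hx
    exact Finset.mem_Ioo.2 ⟨(Finset.mem_filter.1 h1).2, (Finset.mem_filter.1 h2).2⟩
  have e3 : (B.filter (b < ·) ∪ B.filter (· < b')).card
      + (B.filter (b < ·) ∩ B.filter (· < b')).card = r1 + r2 :=
    Finset.card_union_add_card_inter _ _
  rw [hun, hBc] at e3
  have e4 : (B.filter (b < ·) ∩ B.filter (· < b')).card ≤ b' - b - 1 := by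
    calc _ ≤ (Finset.Ioo b b').card := Finset.card_le_card hin
      _ = b' - b - 1 := Nat.card_Ioo _ _
  omega

lemma IsL_edge_mp {n d p : ℕ} {τ : Finset ℕ → Bool} (hτ : IsCoSignotope n d τ)
    (hpc : plusCount τ = p) (hp : p + d ≤ n)
    {B B' : Finset ℕ} (hB : τ B = true) (hB' : τ B' = true)
    {x y b : ℕ} (hxB : x ∈ B) (hyB : y ∉ B)
    (hBB' : B' = insert y (B.erase x))
    (hbetw : ∀ z ∈ B.erase x, ¬(min x y < z ∧ z < max x y))
    (hb : b ∈ B) (hbx : b ≠ x) (hL : IsL n τ B b) : IsL n τ B' b := by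
  classical
  by_contra hL'
  obtain ⟨hBI, hBc⟩ := hτ.1 B hB
  obtain ⟨hBI', hBc'⟩ := hτ.1 B' hB'
  have hbI := Finset.mem_Icc.1 (hBI hb)
  have hby : b ≠ y := fun h => hyB (h ▸ hb)
  have hbB' : b ∈ B' := by
    rw [hBB']; exact Finset.mem_insert_of_mem (Finset.mem_erase.2 ⟨hbx, hb⟩)
  have hxI := Finset.mem_Icc.1 (hBI hxB)
  have hcase : (b < x ∧ b < y) ∨ (x < b ∧ y < b) := by
    have := hbetw b (Finset.mem_erase.2 ⟨hbx, hb⟩)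
    have hbx' : b ≠ x := hbx
    omega
  set S := Finset.Icc 1 b \ B.erase b with hSdef
  set S' := Finset.Icc b n \ B'.erase b with hS'def
  have hSsub : ∀ u ∈ S, u ∈ Finset.Icc 1 n \ B.erase b ∧ u ≤ b := by
    intro u hu
    obtain ⟨hu1, hu2⟩ := Finset.mem_sdiff.1 hu
    obtain ⟨hu3, hu4⟩ := Finset.mem_Icc.1 hu1
    exact ⟨Finset.mem_sdiff.2 ⟨Finset.mem_Icc.2 ⟨hu3, le_trans hu4 hbI.2⟩, hu2⟩, hu4⟩
  have hS'sub : ∀ u ∈ S', u ∈ Finset.Icc 1 n \ B'.erase b ∧ b ≤ u := by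
    intro u hu
    obtain ⟨hu1, hu2⟩ := Finset.mem_sdiff.1 hu
    obtain ⟨hu3, hu4⟩ := Finset.mem_Icc.1 hu1
    exact ⟨Finset.mem_sdiff.2 ⟨Finset.mem_Icc.2 ⟨le_trans hbI.1 hu3, hu4⟩, hu2⟩, hu3⟩
  have hplus : ∀ u ∈ S, τ (insert u (B.erase b)) = true := fun u hu =>
    F1 hτ hB hb hL (hSsub u hu).1 (hSsub u hu).2
  have hplus' : ∀ u ∈ S', τ (insert u (B'.erase b)) = true := fun u hu =>
    F2 hτ hB' hbB' hL' (hS'sub u hu).1 (hS'sub u hu).2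
  have hover : ∀ u ∈ S, ∀ v ∈ S', insert u (B.erase b) = insert v (B'.erase b)
      → insert u (B.erase b) = insert y (B.erase b) := by
    intro u hu v hv he
    have hymem : y ∈ insert v (B'.erase b) := by
      apply Finset.mem_insert_of_mem
      apply Finset.mem_erase.2 ⟨(Ne.symm hby), ?_⟩
      rw [hBB']; exact Finset.mem_insert_self _ _
    rw [← he] at hymem
    rcases Finset.mem_insert.1 hymem with h | h
    · rw [h]
    · exact absurd (Finset.mem_of_mem_erase h) hyB
  have hcount := card_pair_le_p hτ hpc
    (fun u hu => (Finset.mem_sdiff.1 ((hSsub u hu).1)).2)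
    (fun u hu => (Finset.mem_sdiff.1 ((hS'sub u hu).1)).2)
    hplus hplus' hover
  have e1 : S.card + (Finset.Icc 1 b ∩ B.erase b).card = (Finset.Icc 1 b).card :=
    Finset.card_sdiff_add_card_inter _ _
  have e2 : S'.card + (Finset.Icc b n ∩ B'.erase b).card = (Finset.Icc b n).card :=
    Finset.card_sdiff_add_card_inter _ _
  rw [inter_Icc_lo hBI] at e1
  rw [inter_Icc_hi hBI'] at e2
  rw [Nat.card_Icc] at e1 e2
  have hr : (B.filter (· < b)).card + (B.filter (b < ·)).card + 1 = d := by
    rw [← hBc]; exact rank_sum hb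
  have hr' : (B'.filter (· < b)).card + (B'.filter (b < ·)).card + 1 = d := by
    rw [← hBc']; exact rank_sum hbB'
  have hkey : (B.filter (· < b)).card + (B'.filter (b < ·)).card + 1 = d := by
    rcases hcase with ⟨hc1, hc2⟩ | ⟨hc1, hc2⟩
    · have : B'.filter (· < b) = B.filter (· < b) := by
        ext z
        simp only [hBB', Finset.mem_filter, Finset.mem_insert, Finset.mem_erase]
        constructor
        · rintro ⟨rfl | ⟨hz1, hz2⟩, hz3⟩
          · omega
          · exact ⟨hz2, hz3⟩
        · rintro ⟨hz1, hz2⟩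
          exact ⟨Or.inr ⟨by omega, hz1⟩, hz2⟩
      have hcc := congrArg Finset.card this
      omega
    · have : B'.filter (b < ·) = B.filter (b < ·) := by
        ext z
        simp only [hBB', Finset.mem_filter, Finset.mem_insert, Finset.mem_erase]
        constructor
        · rintro ⟨rfl | ⟨hz1, hz2⟩, hz3⟩
          · omega
          · exact ⟨hz2, hz3⟩
        · rintro ⟨hz1, hz2⟩
          exact ⟨Or.inr ⟨by omega, hz1⟩, hz2⟩
      have hcc := congrArg Finset.card this
      omega
  omega

lemma GAdj_symm {n d : ℕ} {B B' : Finset ℕ} (h : GAdj n d B B') : GAdj n d B' B := by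
  obtain ⟨h1, h2, h3, h4, x, hxB, y, hyI, hyB, hBB', hbetw⟩ := h
  have hynotin : y ∉ B.erase x := fun hc => hyB (Finset.mem_of_mem_erase hc)
  have herase : B'.erase y = B.erase x := by
    rw [hBB', Finset.erase_insert hynotin]
  refine ⟨h3, h4, h1, h2, y, ?_, x, h1 hxB, ?_, ?_, ?_⟩
  · rw [hBB']; exact Finset.mem_insert_self _ _
  · intro hxB'
    rw [hBB'] at hxB'
    rcases Finset.mem_insert.1 hxB' with hc | hc
    · exact hyB (hc ▸ hxB)
    · exact (Finset.mem_erase.1 hc).1 rfl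
  · rw [herase, Finset.insert_erase hxB]
  · intro z hz
    rw [herase] at hz
    have := hbetw z hz
    omega

lemma typeOf_edge {n d p : ℕ} {τ : Finset ℕ → Bool} (hτ : IsCoSignotope n d τ)
    (hpc : plusCount τ = p) (hp : p + d ≤ n)
    {B B' : Finset ℕ} (hB : τ B = true) (hB' : τ B' = true) (hadj : GAdj n d B B') :
    typeOf n τ B = typeOf n τ B' := by
  classical
  have hadj' := GAdj_symm hadj
  obtain ⟨h1, h2, h3, h4, x, hxB, y, hyI, hyB, hBB', hbetw⟩ := hadj
  obtain ⟨_, _, _, _, y', hy'B', x', hx'I, hx'B', hB'B, hbetw'⟩ := hadj'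
  -- we re-derive the symm data concretely instead of using hadj' components
  have hynotin : y ∉ B.erase x := fun hc => hyB (Finset.mem_of_mem_erase hc)
  have herase : B'.erase y = B.erase x := by rw [hBB', Finset.erase_insert hynotin]
  have hyB' : y ∈ B' := by rw [hBB']; exact Finset.mem_insert_self _ _
  have hxB' : x ∉ B' := by
    intro hc
    rw [hBB'] at hc
    rcases Finset.mem_insert.1 hc with hc | hc
    · exact hyB (hc ▸ hxB)
    · exact (Finset.mem_erase.1 hc).1 rfl
  have hBeq : B = insert x (B'.erase y) := by rw [herase, Finset.insert_erase hxB]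
  have hbetw2 : ∀ z ∈ B'.erase y, ¬(min y x < z ∧ z < max y x) := by
    intro z hz
    rw [herase] at hz
    have := hbetw z hz
    omega
  have hLxy : IsL n τ B x ↔ IsL n τ B' y := by
    unfold IsL
    rw [herase]
  apply Finset.card_bij (fun b _ => if b = x then y else b)
  · intro b hbmem
    obtain ⟨hbB, hbL⟩ := Finset.mem_filter.1 hbmem
    by_cases hbx : b = x
    · subst hbx
      simp only [if_pos rfl]
      exact Finset.mem_filter.2 ⟨hyB', hLxy.1 hbL⟩
    · simp only [if_neg hbx]
      refine Finset.mem_filter.2 ⟨?_, ?_⟩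
      · rw [hBB']; exact Finset.mem_insert_of_mem (Finset.mem_erase.2 ⟨hbx, hbB⟩)
      · exact IsL_edge_mp hτ hpc hp hB hB' hxB hyB hBB' hbetw hbB hbx hbL
  · intro a₁ ha₁ a₂ ha₂ he
    by_cases h₁ : a₁ = x <;> by_cases h₂ : a₂ = x
    · rw [h₁, h₂]
    · simp only [if_pos h₁, if_neg h₂] at he
      exfalso
      apply hyB
      rw [he]
      exact (Finset.mem_filter.1 ha₂).1
    · simp only [if_neg h₁, if_pos h₂] at he
      exfalso
      apply hyB
      rw [← he]
      exact (Finset.mem_filter.1 ha₁).1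
    · simpa only [if_neg h₁, if_neg h₂] using he
  · intro b' hb'mem
    obtain ⟨hb'B', hb'L⟩ := Finset.mem_filter.1 hb'mem
    by_cases hb'y : b' = y
    · refine ⟨x, Finset.mem_filter.2 ⟨hxB, ?_⟩, by simp [hb'y]⟩
      exact hLxy.2 (hb'y ▸ hb'L)
    · have hb'B : b' ∈ B.erase x := by
        rw [← herase]; exact Finset.mem_erase.2 ⟨hb'y, hb'B'⟩
      obtain ⟨hb'x, hb'Bm⟩ := Finset.mem_erase.1 hb'B
      refine ⟨b', Finset.mem_filter.2 ⟨hb'Bm, ?_⟩, by simp [hb'x]⟩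
      exact IsL_edge_mp hτ hpc hp hB' hB hyB' hxB' hBeq hbetw2 hb'B' hb'y hb'L

lemma mem_source {n d i b : ℕ} :
    b ∈ sourceSubset n d i ↔ ((1 ≤ b ∧ b ≤ i) ∨ (n - d + i + 1 ≤ b ∧ b ≤ n)) := by
  simp [sourceSubset, Finset.mem_union, Finset.mem_Icc]

lemma source_subset_Icc {n d i : ℕ} (hi : i ≤ d) (hdn : d ≤ n) :
    sourceSubset n d i ⊆ Finset.Icc 1 n := by
  intro b hb
  rw [mem_source] at hb
  rw [Finset.mem_Icc]
  omega

lemma source_card {n d i : ℕ} (hi : i ≤ d) (hdn : d ≤ n) :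
    (sourceSubset n d i).card = d := by
  unfold sourceSubset
  rw [Finset.card_union_of_disjoint, Nat.card_Icc, Nat.card_Icc]
  · omega
  · rw [Finset.disjoint_left]
    intro a ha ha'
    rw [Finset.mem_Icc] at ha ha'
    omega

lemma IsL_source_low {n d p i : ℕ} {τ : Finset ℕ → Bool} (hτ : IsCoSignotope n d τ)
    (hpc : plusCount τ = p) (hp : p + d ≤ n) (hi : i ≤ d)
    (hSp : τ (sourceSubset n d i) = true)
    {b : ℕ} (hb1 : 1 ≤ b) (hb2 : b ≤ i) : IsL n τ (sourceSubset n d i) b := by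
  classical
  by_contra hL
  set B := sourceSubset n d i with hBdef
  have hBI : B ⊆ Finset.Icc 1 n := source_subset_Icc hi (by omega : d ≤ n)
  have hb : b ∈ B := mem_source.2 (Or.inl ⟨hb1, hb2⟩)
  set S := Finset.Icc b n \ B.erase b with hSdef
  have hSsub : ∀ u ∈ S, u ∈ Finset.Icc 1 n \ B.erase b ∧ b ≤ u := by
    intro u hu
    obtain ⟨hu1, hu2⟩ := Finset.mem_sdiff.1 hu
    obtain ⟨hu3, hu4⟩ := Finset.mem_Icc.1 hu1
    exact ⟨Finset.mem_sdiff.2 ⟨Finset.mem_Icc.2 ⟨le_trans hb1 hu3, hu4⟩, hu2⟩, hu3⟩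
  have hplus : ∀ u ∈ S, τ (insert u (B.erase b)) = true := fun u hu =>
    F2 hτ hSp hb hL (hSsub u hu).1 (hSsub u hu).2
  have hcount := card_le_p hτ hpc
    (fun u hu => (Finset.mem_sdiff.1 ((hSsub u hu).1)).2) hplus
  have e1 : S.card + (Finset.Icc b n ∩ B.erase b).card = (Finset.Icc b n).card :=
    Finset.card_sdiff_add_card_inter _ _
  rw [inter_Icc_hi hBI, Nat.card_Icc] at e1
  have hfil : B.filter (b < ·) = Finset.Icc (b+1) i ∪ Finset.Icc (n - d + i + 1) n := by
    ext z
    simp only [Finset.mem_filter, Finset.mem_union, Finset.mem_Icc, hBdef, mem_source]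
    omega
  have hcardfil : (B.filter (b < ·)).card = (i - b) + (d - i) := by
    rw [hfil, Finset.card_union_of_disjoint, Nat.card_Icc, Nat.card_Icc]
    · omega
    · rw [Finset.disjoint_left]
      intro a ha ha'
      rw [Finset.mem_Icc] at ha ha'
      omega
  omega

lemma not_IsL_source_high {n d p i : ℕ} {τ : Finset ℕ → Bool} (hτ : IsCoSignotope n d τ)
    (hpc : plusCount τ = p) (hp : p + d ≤ n) (hi : i ≤ d)
    (hSp : τ (sourceSubset n d i) = true)
    {b : ℕ} (hb1 : n - d + i + 1 ≤ b) (hb2 : b ≤ n) : ¬ IsL n τ (sourceSubset n d i) b := by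
  classical
  intro hL
  set B := sourceSubset n d i with hBdef
  have hBI : B ⊆ Finset.Icc 1 n := source_subset_Icc hi (by omega)
  have hb : b ∈ B := mem_source.2 (Or.inr ⟨hb1, hb2⟩)
  set S := Finset.Icc 1 b \ B.erase b with hSdef
  have hSsub : ∀ u ∈ S, u ∈ Finset.Icc 1 n \ B.erase b ∧ u ≤ b := by
    intro u hu
    obtain ⟨hu1, hu2⟩ := Finset.mem_sdiff.1 hu
    obtain ⟨hu3, hu4⟩ := Finset.mem_Icc.1 hu1
    exact ⟨Finset.mem_sdiff.2 ⟨Finset.mem_Icc.2 ⟨hu3, le_trans hu4 hb2⟩, hu2⟩, hu4⟩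
  have hplus : ∀ u ∈ S, τ (insert u (B.erase b)) = true := fun u hu =>
    F1 hτ hSp hb hL (hSsub u hu).1 (hSsub u hu).2
  have hcount := card_le_p hτ hpc
    (fun u hu => (Finset.mem_sdiff.1 ((hSsub u hu).1)).2) hplus
  have e1 : S.card + (Finset.Icc 1 b ∩ B.erase b).card = (Finset.Icc 1 b).card :=
    Finset.card_sdiff_add_card_inter _ _
  rw [inter_Icc_lo hBI, Nat.card_Icc] at e1
  have hfil : B.filter (· < b) = Finset.Icc 1 i ∪ Finset.Icc (n - d + i + 1) (b - 1) := by
    ext z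
    simp only [Finset.mem_filter, Finset.mem_union, Finset.mem_Icc, hBdef, mem_source]
    omega
  have hcardfil : (B.filter (· < b)).card = i + (b - (n - d + i + 1)) := by
    rw [hfil, Finset.card_union_of_disjoint, Nat.card_Icc, Nat.card_Icc]
    · omega
    · rw [Finset.disjoint_left]
      intro a ha ha'
      rw [Finset.mem_Icc] at ha ha'
      omega
  omega

lemma typeOf_source {n d p i : ℕ} {τ : Finset ℕ → Bool} (hτ : IsCoSignotope n d τ)
    (hpc : plusCount τ = p) (hp : p + d ≤ n) (hi : i ≤ d)
    (hSp : τ (sourceSubset n d i) = true) :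
    typeOf n τ (sourceSubset n d i) = i := by
  classical
  unfold typeOf
  have hfil : (sourceSubset n d i).filter (fun b => IsL n τ (sourceSubset n d i) b)
      = Finset.Icc 1 i := by
    ext b
    simp only [Finset.mem_filter, Finset.mem_Icc, mem_source]
    constructor
    · rintro ⟨hmem, hL⟩
      rcases hmem with ⟨h1, h2⟩ | ⟨h1, h2⟩
      · exact ⟨h1, h2⟩
      · exact absurd hL (not_IsL_source_high hτ hpc hp hi hSp h1 h2)
    · rintro ⟨h1, h2⟩
      exact ⟨Or.inl ⟨h1, h2⟩, IsL_source_low hτ hpc hp hi hSp h1 h2⟩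
  rw [hfil, Nat.card_Icc]
  omega

lemma stuck_eq_source {n d p : ℕ} {τ : Finset ℕ → Bool} (hτ : IsCoSignotope n d τ)
    (hpc : plusCount τ = p) (hp : p + d ≤ n)
    {B : Finset ℕ} (hB : τ B = true)
    (hnoL : ∀ b ∈ B, IsL n τ B b → b = 1 ∨ b - 1 ∈ B)
    (hnoR : ∀ b ∈ B, ¬ IsL n τ B b → b = n ∨ b + 1 ∈ B) :
    B = sourceSubset n d (typeOf n τ B) := by
  classical
  obtain ⟨hBI, hBc⟩ := hτ.1 B hB
  set A := B.filter (fun b => IsL n τ B b) with hAdef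
  set R := B.filter (fun b => ¬ IsL n τ B b) with hRdef
  have hdown : ∀ b ∈ B, ∀ b' ∈ B, b < b' → IsL n τ B b' → IsL n τ B b :=
    fun b hb b' hb' hlt hL => F3 hτ hpc hp hB hb hb' hlt hL
  have claimA : ∀ a, a ∈ A → ∀ z, 1 ≤ z → z ≤ a → z ∈ A := by
    intro a
    induction a using Nat.strong_induction_on with
    | _ a ih =>
      intro ha z hz1 hz2
      rcases eq_or_lt_of_le hz2 with rfl | hlt
      · exact ha
      obtain ⟨haB, haL⟩ := Finset.mem_filter.1 ha
      rcases hnoL a haB haL with h1 | h1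
      · omega
      · have ha1B : a - 1 ∈ B := h1
        have ha1L : IsL n τ B (a - 1) := hdown _ ha1B _ haB (by omega) haL
        exact ih (a - 1) (by omega) (Finset.mem_filter.2 ⟨ha1B, ha1L⟩) z hz1 (by omega)
  have claimR : ∀ k r, r ∈ R → n - r ≤ k → ∀ z, r ≤ z → z ≤ n → z ∈ R := by
    intro k
    induction k with
    | zero =>
      intro r hr hk z hz1 hz2
      have hrB := (Finset.mem_filter.1 hr).1
      have := Finset.mem_Icc.1 (hBI hrB)
      have : z = r := by omega
      rw [this]; exact hr
    | succ k ih =>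
      intro r hr hk z hz1 hz2
      rcases eq_or_lt_of_le hz1 with rfl | hlt
      · exact hr
      obtain ⟨hrB, hrL⟩ := Finset.mem_filter.1 hr
      rcases hnoR r hrB hrL with h1 | h1
      · omega
      · have hr1L : ¬ IsL n τ B (r + 1) := fun hc => hrL (hdown _ hrB _ h1 (by omega) hc)
        exact ih (r + 1) (Finset.mem_filter.2 ⟨h1, hr1L⟩) (by omega) z (by omega) hz2
  have hA : ∃ t, A.card = t ∧ A = Finset.Icc 1 t := by
    rcases Finset.eq_empty_or_nonempty A with he | hne
    · exact ⟨0, by simp [he], by simp [he]⟩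
    · have hmax := A.max'_mem hne
      have h1A : ∀ z ∈ A, 1 ≤ z := fun z hz =>
        (Finset.mem_Icc.1 (hBI (Finset.mem_filter.1 hz).1)).1
      have heq : A = Finset.Icc 1 (A.max' hne) := by
        apply subset_antisymm
        · intro z hz
          exact Finset.mem_Icc.2 ⟨h1A z hz, Finset.le_max' A z hz⟩
        · intro z hz
          obtain ⟨hz1, hz2⟩ := Finset.mem_Icc.1 hz
          exact claimA _ hmax z hz1 hz2
      refine ⟨A.max' hne, ?_, heq⟩
      conv_lhs => rw [heq]
      rw [Nat.card_Icc]
      have := h1A _ hmax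
      omega
  have hR : ∃ t, R.card = t ∧ R = Finset.Icc (n + 1 - t) n := by
    rcases Finset.eq_empty_or_nonempty R with he | hne
    · refine ⟨0, by simp [he], ?_⟩
      rw [he, eq_comm, Finset.Icc_eq_empty]
      omega
    · have hmin := R.min'_mem hne
      have hnR : ∀ z ∈ R, z ≤ n := fun z hz =>
        (Finset.mem_Icc.1 (hBI (Finset.mem_filter.1 hz).1)).2
      have heq : R = Finset.Icc (R.min' hne) n := by
        apply subset_antisymm
        · intro z hz
          exact Finset.mem_Icc.2 ⟨Finset.min'_le R z hz, hnR z hz⟩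
        · intro z hz
          obtain ⟨hz1, hz2⟩ := Finset.mem_Icc.1 hz
          exact claimR n _ hmin (by omega) z hz1 hz2
      have hge1 : 1 ≤ R.min' hne :=
        (Finset.mem_Icc.1 (hBI (Finset.mem_filter.1 hmin).1)).1
      have hlen : R.min' hne ≤ n := hnR _ hmin
      have hcard : R.card = n + 1 - R.min' hne := by
        conv_lhs => rw [heq]
        rw [Nat.card_Icc]
      refine ⟨R.card, rfl, ?_⟩
      rw [hcard, show n + 1 - (n + 1 - R.min' hne) = R.min' hne from by omega]
      exact heq
  obtain ⟨ta, hta, hAeq⟩ := hA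
  obtain ⟨tr, htr, hReq⟩ := hR
  have hsplit : A ∪ R = B := Finset.filter_union_filter_not_eq _ B
  have hcards : A.card + R.card = B.card := by
    rw [hAdef, hRdef]
    exact Finset.card_filter_add_card_filter_not _
  have htd : typeOf n τ B = A.card := rfl
  rw [htd, hta]
  unfold sourceSubset
  rw [show n - d + ta + 1 = n + 1 - tr from by omega]
  rw [← hsplit, hAeq, hReq]

lemma IsL_edge_iff {n d p : ℕ} {τ : Finset ℕ → Bool} (hτ : IsCoSignotope n d τ)
    (hpc : plusCount τ = p) (hp : p + d ≤ n)
    {B B' : Finset ℕ} (hB : τ B = true) (hB' : τ B' = true)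
    {x y b : ℕ} (hxB : x ∈ B) (hyB : y ∉ B)
    (hBB' : B' = insert y (B.erase x))
    (hbetw : ∀ z ∈ B.erase x, ¬(min x y < z ∧ z < max x y))
    (hb : b ∈ B) (hbx : b ≠ x) : (IsL n τ B b ↔ IsL n τ B' b) := by
  have hby : b ≠ y := fun h => hyB (h ▸ hb)
  have hynotin : y ∉ B.erase x := fun hc => hyB (Finset.mem_of_mem_erase hc)
  have herase : B'.erase y = B.erase x := by rw [hBB', Finset.erase_insert hynotin]
  have hyB' : y ∈ B' := by rw [hBB']; exact Finset.mem_insert_self _ _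
  have hxB' : x ∉ B' := by
    intro hc
    rw [hBB'] at hc
    rcases Finset.mem_insert.1 hc with hc | hc
    · exact hyB (hc ▸ hxB)
    · exact (Finset.mem_erase.1 hc).1 rfl
  have hBeq : B = insert x (B'.erase y) := by rw [herase, Finset.insert_erase hxB]
  have hbetw2 : ∀ z ∈ B'.erase y, ¬(min y x < z ∧ z < max y x) := by
    intro z hz
    rw [herase] at hz
    have := hbetw z hz
    omega
  have hbB' : b ∈ B' := by
    rw [hBB']; exact Finset.mem_insert_of_mem (Finset.mem_erase.2 ⟨hbx, hb⟩)
  constructor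
  · exact IsL_edge_mp hτ hpc hp hB hB' hxB hyB hBB' hbetw hb hbx
  · exact IsL_edge_mp hτ hpc hp hB' hB hyB' hxB' hBeq hbetw2 hbB' hby

def Psi (n : ℕ) (τ : Finset ℕ → Bool) (B : Finset ℕ) : ℕ :=
  ∑ b ∈ B, (if IsL n τ B b then b else n - b)

lemma reach_source {n d p : ℕ} {τ : Finset ℕ → Bool} (hτ : IsCoSignotope n d τ)
    (hpc : plusCount τ = p) (hp : p + d ≤ n) :
    ∀ (N : ℕ) (B : Finset ℕ), Psi n τ B ≤ N → τ B = true →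
    τ (sourceSubset n d (typeOf n τ B)) = true ∧
      plusConn n d τ (sourceSubset n d (typeOf n τ B)) B := by
  intro N
  induction N using Nat.strong_induction_on with
  | _ N ih =>
    intro B hN hB
    obtain ⟨hBI, hBc⟩ := hτ.1 B hB
    by_cases hstuck : (∀ b ∈ B, IsL n τ B b → b = 1 ∨ b - 1 ∈ B)
        ∧ (∀ b ∈ B, ¬ IsL n τ B b → b = n ∨ b + 1 ∈ B)
    · have heq := stuck_eq_source hτ hpc hp hB hstuck.1 hstuck.2
      refine ⟨?_, ?_⟩
      · rw [← heq]; exact hB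
      · rw [← heq]
        exact Relation.ReflTransGen.refl
    · -- a move exists
      rcases not_and_or.1 hstuck with hmov | hmov
      · -- L-move
        push_neg at hmov
        obtain ⟨b, hb, hL, hb1, hbm⟩ := hmov
        have hbI := Finset.mem_Icc.1 (hBI hb)
        have hb2 : 2 ≤ b := by omega
        set y := b - 1 with hydef
        set B' := insert y (B.erase b) with hB'def
        have hyB : y ∉ B := hbm
        have hynotin : y ∉ B.erase b := fun hc => hyB (Finset.mem_of_mem_erase hc)
        have hyI : y ∈ Finset.Icc 1 n := Finset.mem_Icc.2 ⟨by omega, by omega⟩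
        have hymem : y ∈ Finset.Icc 1 n \ B.erase b := Finset.mem_sdiff.2 ⟨hyI, hynotin⟩
        have hB'p : τ B' = true := F1 hτ hB hb hL hymem (by omega)
        obtain ⟨hB'I, hB'c⟩ := hτ.1 B' hB'p
        have hbetw : ∀ z ∈ B.erase b, ¬(min b y < z ∧ z < max b y) := by
          intro z hz; omega
        have hadj : GAdj n d B B' :=
          ⟨hBI, hBc, hB'I, hB'c, b, hb, y, hyI, hyB, hB'def, hbetw⟩
        have htype : typeOf n τ B = typeOf n τ B' := typeOf_edge hτ hpc hp hB hB'p hadj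
        -- Psi decreases
        have hsame : IsL n τ B' y ↔ IsL n τ B b := by
          unfold IsL
          rw [hB'def, Finset.erase_insert hynotin]
        have hpsi : Psi n τ B' < Psi n τ B := by
          unfold Psi
          rw [hB'def, Finset.sum_insert hynotin]
          rw [← Finset.add_sum_erase B _ hb]
          have hsum : ∑ c ∈ B.erase b, (if IsL n τ (insert y (B.erase b)) c then c else n - c)
              = ∑ c ∈ B.erase b, (if IsL n τ B c then c else n - c) := by
            apply Finset.sum_congr rfl
            intro c hc
            obtain ⟨hcb, hcB⟩ := Finset.mem_erase.1 hc
            have := IsL_edge_iff hτ hpc hp hB hB'p hb hyB hB'def hbetw hcB hcb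
            rw [hB'def] at this
            by_cases hcl : IsL n τ B c
            · rw [if_pos hcl, if_pos (this.1 hcl)]
            · rw [if_neg hcl, if_neg (fun hc2 => hcl (this.2 hc2))]
          rw [hsum]
          have h1 : (if IsL n τ B' y then y else n - y) = y := by
            rw [if_pos (hsame.2 hL)]
          rw [hB'def] at h1
          rw [h1, if_pos hL]
          omega
        obtain ⟨hs1, hs2⟩ := ih (Psi n τ B') (by omega) B' (le_refl _) hB'p
        rw [← htype] at hs1 hs2
        refine ⟨hs1, ?_⟩
        exact hs2.tail ⟨hB'p, hB, GAdj_symm hadj⟩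
      · -- R-move
        push_neg at hmov
        obtain ⟨b, hb, hL, hb1, hbm⟩ := hmov
        have hbI := Finset.mem_Icc.1 (hBI hb)
        have hb2 : b + 1 ≤ n := by omega
        set y := b + 1 with hydef
        set B' := insert y (B.erase b) with hB'def
        have hyB : y ∉ B := hbm
        have hynotin : y ∉ B.erase b := fun hc => hyB (Finset.mem_of_mem_erase hc)
        have hyI : y ∈ Finset.Icc 1 n := Finset.mem_Icc.2 ⟨by omega, hb2⟩
        have hymem : y ∈ Finset.Icc 1 n \ B.erase b := Finset.mem_sdiff.2 ⟨hyI, hynotin⟩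
        have hB'p : τ B' = true := F2 hτ hB hb hL hymem (by omega)
        obtain ⟨hB'I, hB'c⟩ := hτ.1 B' hB'p
        have hbetw : ∀ z ∈ B.erase b, ¬(min b y < z ∧ z < max b y) := by
          intro z hz; omega
        have hadj : GAdj n d B B' :=
          ⟨hBI, hBc, hB'I, hB'c, b, hb, y, hyI, hyB, hB'def, hbetw⟩
        have htype : typeOf n τ B = typeOf n τ B' := typeOf_edge hτ hpc hp hB hB'p hadj
        have hsame : IsL n τ B' y ↔ IsL n τ B b := by
          unfold IsL
          rw [hB'def, Finset.erase_insert hynotin]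
        have hpsi : Psi n τ B' < Psi n τ B := by
          unfold Psi
          rw [hB'def, Finset.sum_insert hynotin]
          rw [← Finset.add_sum_erase B _ hb]
          have hsum : ∑ c ∈ B.erase b, (if IsL n τ (insert y (B.erase b)) c then c else n - c)
              = ∑ c ∈ B.erase b, (if IsL n τ B c then c else n - c) := by
            apply Finset.sum_congr rfl
            intro c hc
            obtain ⟨hcb, hcB⟩ := Finset.mem_erase.1 hc
            have := IsL_edge_iff hτ hpc hp hB hB'p hb hyB hB'def hbetw hcB hcb
            rw [hB'def] at this
            by_cases hcl : IsL n τ B c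
            · rw [if_pos hcl, if_pos (this.1 hcl)]
            · rw [if_neg hcl, if_neg (fun hc2 => hcl (this.2 hc2))]
          rw [hsum]
          have h1 : (if IsL n τ B' y then y else n - y) = n - y := by
            rw [if_neg (fun hc => hL (hsame.1 hc))]
          rw [hB'def] at h1
          rw [h1, if_neg hL]
          omega
        obtain ⟨hs1, hs2⟩ := ih (Psi n τ B') (by omega) B' (le_refl _) hB'p
        rw [← htype] at hs1 hs2
        refine ⟨hs1, ?_⟩
        exact hs2.tail ⟨hB'p, hB, GAdj_symm hadj⟩

lemma type_comp {n d p i : ℕ} {τ : Finset ℕ → Bool} (hτ : IsCoSignotope n d τ)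
    (hpc : plusCount τ = p) (hp : p + d ≤ n) (hi : i ≤ d)
    {B : Finset ℕ} (hmem : B ∈ comp n d τ i) : τ B = true ∧ typeOf n τ B = i := by
  obtain ⟨hSp, hBp, hconn⟩ := hmem
  refine ⟨hBp, ?_⟩
  clear hBp
  induction hconn with
  | refl => exact typeOf_source hτ hpc hp hi hSp
  | tail hsteps hstep ih =>
    rw [← typeOf_edge hτ hpc hp hstep.1 hstep.2.1 hstep.2.2]
    exact ih

lemma source_adj {n d j : ℕ} (hdn : d < n) (hj1 : 1 ≤ j) (hjd : j ≤ d) :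
    GAdj n d (sourceSubset n d (j - 1)) (sourceSubset n d j) := by
  refine ⟨source_subset_Icc (by omega) (by omega), source_card (by omega) (by omega),
    source_subset_Icc hjd (by omega), source_card hjd (by omega),
    n - d + j, ?_, j, ?_, ?_, ?_, ?_⟩
  · rw [mem_source]; omega
  · rw [Finset.mem_Icc]; omega
  · rw [mem_source]; omega
  · ext z
    simp only [Finset.mem_insert, Finset.mem_erase, mem_source]
    omega
  · intro z hz
    obtain ⟨hz1, hz2⟩ := Finset.mem_erase.1 hz
    rw [mem_source] at hz2
    omega
/-- **Lemma.** For `p ≤ n - d`, the p-sequence `(|𝒞^τ_0|, …, |𝒞^τ_d|)` of every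
`τ ∈ 𝒮̄_p(n,d)` is a sparse composition of `p` of length `d+1`. -/
theorem statement11 (n d p : ℕ) (hdn : d < n) (hp : p + d ≤ n)
    (τ : Finset ℕ → Bool) (hτ : τ ∈ coSigSet n d p) :
    IsSparseComposition d p (fun i : Fin (d + 1) => (comp n d τ (i : ℕ)).ncard) := by
  classical
  obtain ⟨hco, hpc⟩ := hτ
  set T := ((Finset.Icc 1 n).powerset).filter (fun A => τ A = true) with hTdef
  have hTcard : T.card = p := by rw [hTdef, ← plusCount_eq_card hco.1, hpc]
  have htle : ∀ B ∈ T, typeOf n τ B ≤ d := by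
    intro B hBT
    obtain ⟨hBs, hBp⟩ := Finset.mem_filter.1 hBT
    have hBc := (hco.1 B hBp).2
    calc typeOf n τ B ≤ B.card := Finset.card_filter_le _ _
      _ = d := hBc
  have hcomp_eq : ∀ i : ℕ, i ≤ d →
      comp n d τ i = ↑(T.filter (fun B => typeOf n τ B = i)) := by
    intro i hi
    ext B
    simp only [Finset.coe_filter, Finset.mem_filter, Finset.mem_powerset, Set.mem_setOf_eq,
      hTdef]
    constructor
    · intro hmem
      have h2 := type_comp hco hpc hp hi hmem
      exact ⟨⟨(hco.1 B h2.1).1, h2.1⟩, h2.2⟩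
    · rintro ⟨⟨hsub, hBp⟩, htype⟩
      obtain ⟨hs1, hs2⟩ := reach_source hco hpc hp (Psi n τ B) B (le_refl _) hBp
      rw [htype] at hs1 hs2
      exact ⟨hs1, hBp, hs2⟩
  constructor
  · -- sum
    have hrw : ∀ i : Fin (d + 1),
        (comp n d τ (i : ℕ)).ncard = (T.filter (fun B => typeOf n τ B = (i : ℕ))).card := by
      intro i
      rw [hcomp_eq (i : ℕ) (by omega), Set.ncard_coe_finset]
    rw [Finset.sum_congr rfl (fun i _ => hrw i)]
    have hfib : T.card = ∑ i : Fin (d + 1),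
        (T.filter (fun B => (⟨min (typeOf n τ B) d, by omega⟩ : Fin (d + 1)) = i)).card := by
      apply Finset.card_eq_sum_card_fiberwise
      intro B hBT
      exact Finset.mem_univ _
    have hfe : ∀ i : Fin (d + 1),
        T.filter (fun B => (⟨min (typeOf n τ B) d, by omega⟩ : Fin (d + 1)) = i)
          = T.filter (fun B => typeOf n τ B = (i : ℕ)) := by
      intro i
      apply Finset.filter_congr
      intro B hBT
      have hle := htle B hBT
      constructor
      · intro h
        have := congrArg Fin.val h
        simp only [Fin.val_mk] at this
        omega
      · intro h
        apply Fin.ext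
        simp only [Fin.val_mk]
        omega
    simp only [hfe] at hfib
    rw [← hfib, hTcard]
  · -- sparse
    intro i hi1
    by_contra hcon
    push_neg at hcon
    obtain ⟨h1, h2⟩ := hcon
    have hjd : (i : ℕ) ≤ d := by omega
    obtain ⟨B1, hB1⟩ := Set.nonempty_of_ncard_ne_zero h1
    obtain ⟨B2, hB2⟩ := Set.nonempty_of_ncard_ne_zero h2
    have hSj : τ (sourceSubset n d (i : ℕ)) = true := hB1.1
    have hSj1 : τ (sourceSubset n d ((i : ℕ) - 1)) = true := hB2.1
    have t1 := typeOf_source hco hpc hp hjd hSj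
    have t2 := typeOf_source hco hpc hp (by omega) hSj1
    have hadj := source_adj hdn hi1 hjd (n := n)
    have := typeOf_edge hco hpc hp hSj1 hSj hadj
    rw [t1, t2] at this
    omega
end

section
/- Let $n, d, p$ be non-negative integers with $0 \le d < n$ and $p \le n-d$. For every sparse composition $(c_0,\dots,c_d)$ of $p$ of length $d+1$ and every choice of co-signotopes $\tau_0,\dots,\tau_d$ with $\tau_i \in \bar{\mathcal{S}}_{c_i,i}(n,d)$ for each $i$, there exists a unique co-signotope $\tau \in \bar{\mathcal{S}}_p(n,d)$ whose p-sequence is $(c_0,\dots,c_d)$ and whose $+$-component decomposition satisfies $\Delta(\tau)=(\tau_0,\tau_1,\dots,\tau_d)$. -/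
-- ===== auxiliary development =====
set_option linter.unusedVariables false
lemma sc_cons_cons (a b : Bool) (t : List Bool) :
    signChanges (a :: b :: t) = (if a = b then 0 else 1) + signChanges (b :: t) := by
  simp [signChanges, List.zip]
  by_cases h : a = b <;> simp [h, Nat.add_comm]

lemma sc_nil : signChanges [] = 0 := rfl
lemma sc_single (a : Bool) : signChanges [a] = 0 := rfl

lemma sc_le_cons (a : Bool) (l : List Bool) : signChanges l ≤ signChanges (a :: l) := by
  cases l with
  | nil => simp [sc_nil, sc_single]
  | cons b t => rw [sc_cons_cons]; omega

lemma sc_cons_swap (x a : Bool) (l : List Bool) :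
    signChanges (x :: l) ≤ signChanges (x :: a :: l) := by
  cases l with
  | nil => simp [sc_single, sc_cons_cons]
  | cons b t =>
    rw [sc_cons_cons, sc_cons_cons (a := x) (b := a), sc_cons_cons (a := a) (b := b)]
    by_cases h1 : x = b <;> by_cases h2 : x = a <;> by_cases h3 : a = b <;>
      simp_all <;> omega

lemma sc_cons_mono {s l : List Bool} (h : List.Sublist s l) :
    ∀ x, signChanges (x :: s) ≤ signChanges (x :: l) := by
  induction h with
  | slnil => intro x; exact le_refl _
  | cons a h ih => intro x; exact le_trans (ih x) (sc_cons_swap x a _)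
  | cons_cons a h ih =>
    intro x
    rw [sc_cons_cons, sc_cons_cons]
    exact Nat.add_le_add_left (ih a) _

lemma sc_mono {s l : List Bool} (h : List.Sublist s l) : signChanges s ≤ signChanges l := by
  induction h with
  | slnil => exact le_refl _
  | cons a h ih => exact le_trans ih (sc_le_cons a _)
  | cons_cons a h ih => exact sc_cons_mono ‹_› a

lemma sc_aba {a b : Bool} (h : a ≠ b) : signChanges [a, b, a] = 2 := by
  rw [sc_cons_cons, sc_cons_cons, sc_single]
  simp [h, Ne.symm h]

lemma sc_exists_change {l : List Bool} (h : 1 ≤ signChanges l) :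
    ∃ c : Bool, List.Sublist [c, !c] l := by
  induction l with
  | nil => simp [sc_nil] at h
  | cons x t ih =>
    cases t with
    | nil => simp [sc_single] at h
    | cons b t' =>
      by_cases hxb : x = b
      · rw [sc_cons_cons, if_pos hxb, Nat.zero_add] at h
        obtain ⟨c, hc⟩ := ih h
        exact ⟨c, hc.cons x⟩
      · refine ⟨x, ?_⟩
        have hb : b = !x := by cases x <;> cases b <;> simp_all
        subst hb
        exact (List.Sublist.cons₂ x (List.Sublist.cons₂ _ (List.nil_sublist t')))

lemma cons_sublist_of_ne {α : Type*} {a b : α} {l t : List α}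
    (h : List.Sublist (a :: l) (b :: t)) (hab : a ≠ b) : List.Sublist (a :: l) t := by
  cases h with
  | cons _ h => exact h
  | cons_cons => exact absurd rfl hab

lemma sc_exists_aba {l : List Bool} (h : 2 ≤ signChanges l) :
    ∃ c : Bool, List.Sublist [c, !c, c] l := by
  induction l with
  | nil => simp [sc_nil] at h
  | cons x t ih =>
    cases t with
    | nil => simp [sc_single] at h
    | cons b t' =>
      by_cases hxb : x = b
      · rw [sc_cons_cons, if_pos hxb, Nat.zero_add] at h
        obtain ⟨c, hc⟩ := ih h
        exact ⟨c, hc.cons x⟩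
      · rw [sc_cons_cons, if_neg hxb] at h
        have h1 : 1 ≤ signChanges (b :: t') := by omega
        obtain ⟨c, hc⟩ := sc_exists_change h1
        have hb : b = !x := by cases x <;> cases b <;> simp_all
        subst hb
        by_cases hcx : c = !x
        · -- [c, !c] = [!x, x] <+ (!x) :: t' ; pattern [x, !x, x]
          refine ⟨x, ?_⟩
          have : List.Sublist [!x, x] ((!x) :: t') := by simpa [hcx] using hc
          exact this.cons₂ x
        · -- c = x : [x, !x] <+ (!x)::t' so [x,!x] <+ t'
          have hcx2 : c = x := by cases c <;> cases x <;> simp_all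
          subst hcx2
          have h2 : List.Sublist [c, !c] t' :=
            cons_sublist_of_ne hc (by simp)
          refine ⟨!c, ?_⟩
          simp only [Bool.not_not]
          exact (h2.cons₂ _).cons _

lemma sorted_sublist2 {l : List ℕ} (hs : l.Pairwise (· < ·)) {x y : ℕ}
    (hx : x ∈ l) (hy : y ∈ l) (hxy : x < y) : List.Sublist [x, y] l := by
  induction l with
  | nil => simp at hx
  | cons a t ih =>
    have hst : t.Pairwise (· < ·) := hs.of_cons
    rcases List.mem_cons.mp hx with rfl | hx'
    · have hy' : y ∈ t := by
        rcases List.mem_cons.mp hy with rfl | h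
        · omega
        · exact h
      exact (List.singleton_sublist.mpr hy').cons₂ x
    · have hax : a < x := (List.pairwise_cons.mp hs).1 x hx'
      have hy' : y ∈ t := by
        rcases List.mem_cons.mp hy with rfl | h
        · omega
        · exact h
      exact (ih hst hx' hy').cons a

lemma sorted_sublist3 {l : List ℕ} (hs : l.Pairwise (· < ·)) {x y z : ℕ}
    (hx : x ∈ l) (hy : y ∈ l) (hz : z ∈ l) (hxy : x < y) (hyz : y < z) :
    List.Sublist [x, y, z] l := by
  induction l with
  | nil => simp at hx
  | cons a t ih =>
    have hst : t.Pairwise (· < ·) := hs.of_cons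
    rcases List.mem_cons.mp hx with rfl | hx'
    · have hy' : y ∈ t := by rcases List.mem_cons.mp hy with rfl | h; omega; exact h
      have hz' : z ∈ t := by rcases List.mem_cons.mp hz with rfl | h; omega; exact h
      exact (sorted_sublist2 hst hy' hz' hyz).cons₂ x
    · have hax : a < x := (List.pairwise_cons.mp hs).1 x hx'
      have hy' : y ∈ t := by rcases List.mem_cons.mp hy with rfl | h; omega; exact h
      have hz' : z ∈ t := by rcases List.mem_cons.mp hz with rfl | h; omega; exact h
      exact (ih hst hx' hy' hz').cons a

def rk (X : Finset ℕ) (b : ℕ) : ℕ := (X ∩ Finset.Icc 1 b).card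

lemma rk_mono (X : Finset ℕ) {b b' : ℕ} (h : b ≤ b') : rk X b ≤ rk X b' :=
  Finset.card_le_card (Finset.inter_subset_inter (le_refl _) (Finset.Icc_subset_Icc_right h))

lemma rk_strict {X : Finset ℕ} {b b' : ℕ} (hb' : b' ∈ X) (h1 : 1 ≤ b') (hbb : b < b') :
    rk X b < rk X b' := by
  apply Finset.card_lt_card
  constructor
  · exact Finset.inter_subset_inter (le_refl _) (Finset.Icc_subset_Icc_right (le_of_lt hbb))
  · intro hsub
    have : b' ∈ X ∩ Finset.Icc 1 b' := Finset.mem_inter.mpr ⟨hb', by simp [h1]⟩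
    have := hsub this
    simp [Finset.mem_inter, Finset.mem_Icc] at this
    omega

lemma rk_pos {X : Finset ℕ} {b : ℕ} (hb : b ∈ X) (h1 : 1 ≤ b) : 1 ≤ rk X b := by
  have : b ∈ X ∩ Finset.Icc 1 b := Finset.mem_inter.mpr ⟨hb, by simp [h1]⟩
  exact Finset.card_pos.mpr ⟨b, this⟩

lemma rk_le_card (X : Finset ℕ) (b : ℕ) : rk X b ≤ X.card :=
  Finset.card_le_card (Finset.inter_subset_left)

lemma rk_lt_iff {n : ℕ} {X : Finset ℕ} (hX : X ⊆ Finset.Icc 1 n) {b b' : ℕ}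
    (hb : b ∈ X) (hb' : b' ∈ X) : b < b' ↔ rk X b < rk X b' := by
  constructor
  · intro h
    exact rk_strict hb' (by have := hX hb'; simp [Finset.mem_Icc] at this; omega) h
  · intro h
    by_contra hle
    push_neg at hle
    rcases eq_or_lt_of_le hle with rfl | hlt
    · omega
    · have := rk_strict hb (by have := hX hb; simp [Finset.mem_Icc] at this; omega) hlt
      omega

lemma rk_injOn {n : ℕ} {X : Finset ℕ} (hX : X ⊆ Finset.Icc 1 n) :
    Set.InjOn (rk X) X := by
  intro a ha b hb hab
  simp only [Finset.coe_mem, Finset.mem_coe] at ha hb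
  by_contra hne
  rcases Nat.lt_or_ge a b with h | h
  · have := (rk_lt_iff hX ha hb).mp h; omega
  · rcases eq_or_lt_of_le h with h2 | h2
    · exact hne h2.symm
    · have := (rk_lt_iff hX hb ha).mp h2; omega

lemma rk_image {n : ℕ} {X : Finset ℕ} (hX : X ⊆ Finset.Icc 1 n) :
    X.image (rk X) = Finset.Icc 1 X.card := by
  apply Finset.eq_of_subset_of_card_le
  · intro j hj
    simp only [Finset.mem_image] at hj
    obtain ⟨b, hb, rfl⟩ := hj
    simp only [Finset.mem_Icc]
    exact ⟨rk_pos hb (by have := hX hb; simp [Finset.mem_Icc] at this; omega), rk_le_card X b⟩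
  · rw [Nat.card_Icc]
    rw [Finset.card_image_of_injOn (rk_injOn hX)]
    omega

lemma rk_exists {n : ℕ} {X : Finset ℕ} (hX : X ⊆ Finset.Icc 1 n) {j : ℕ}
    (h1 : 1 ≤ j) (h2 : j ≤ X.card) : ∃ b ∈ X, rk X b = j := by
  have : j ∈ X.image (rk X) := by rw [rk_image hX]; simp [Finset.mem_Icc]; omega
  simpa only [Finset.mem_image] using this

lemma rk_filter_card {n : ℕ} {X : Finset ℕ} (hX : X ⊆ Finset.Icc 1 n) {m : ℕ}
    (hm : m ≤ X.card) : (X.filter (fun b => rk X b ≤ m)).card = m := by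
  have himg : (X.filter (fun b => rk X b ≤ m)).image (rk X) = Finset.Icc 1 m := by
    apply Finset.Subset.antisymm
    · intro j hj
      simp only [Finset.mem_image, Finset.mem_filter] at hj
      obtain ⟨b, ⟨hb, hble⟩, rfl⟩ := hj
      simp only [Finset.mem_Icc]
      exact ⟨rk_pos hb (by have := hX hb; simp [Finset.mem_Icc] at this; omega), hble⟩
    · intro j hj
      simp only [Finset.mem_Icc] at hj
      obtain ⟨b, hb, rfl⟩ := rk_exists hX hj.1 (le_trans hj.2 hm)
      exact Finset.mem_image_of_mem _ (Finset.mem_filter.mpr ⟨hb, hj.2⟩)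
  have hinj : Set.InjOn (rk X) (X.filter (fun b => rk X b ≤ m)) := by
    apply (rk_injOn hX).mono
    intro a ha
    simp only [Finset.coe_filter, Set.mem_setOf_eq] at ha
    exact ha.1
  have := Finset.card_image_of_injOn hinj
  rw [himg, Nat.card_Icc] at this
  omega

lemma row_le_one {n d : ℕ} {τ : Finset ℕ → Bool} (hτ : IsCoSignotope n d τ) {C : Finset ℕ}
    (hC : C ⊆ Finset.Icc 1 n) (hCd : C.card + 1 = d) {y : ℕ} (hy : y ∈ Finset.Icc 1 n)
    (hyC : y ∉ C) : signChanges (series n τ C) ≤ 1 := by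
  have h := hτ.2 (insert y C) (Finset.insert_subset hy hC)
    (by rw [Finset.card_insert_of_notMem hyC]; omega) y (Finset.mem_insert_self _ _)
  rwa [Finset.erase_insert hyC] at h

lemma rowPattern {n d : ℕ} {τ : Finset ℕ → Bool} (hτ : IsCoSignotope n d τ) {C : Finset ℕ}
    (hC : C ⊆ Finset.Icc 1 n) (hCd : C.card + 1 = d) {x y z : ℕ}
    (hx : x ∈ Finset.Icc 1 n) (hy : y ∈ Finset.Icc 1 n) (hz : z ∈ Finset.Icc 1 n)
    (hxC : x ∉ C) (hyC : y ∉ C) (hzC : z ∉ C) (hxy : x < y) (hyz : y < z)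
    (hval : τ (insert x C) = τ (insert z C)) : τ (insert y C) = τ (insert x C) := by
  by_contra hne
  have hsl : List.Sublist [x, y, z] ((Finset.Icc 1 n \ C).sort (· ≤ ·)) :=
    sorted_sublist3 ((Finset.sortedLT_sort _).pairwise)
      ((Finset.mem_sort _).mpr (Finset.mem_sdiff.mpr ⟨hx, hxC⟩))
      ((Finset.mem_sort _).mpr (Finset.mem_sdiff.mpr ⟨hy, hyC⟩))
      ((Finset.mem_sort _).mpr (Finset.mem_sdiff.mpr ⟨hz, hzC⟩)) hxy hyz
  have hmap : List.Sublist [τ (insert x C), τ (insert y C), τ (insert z C)]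
      (series n τ C) := by
    simpa [series] using hsl.map (fun u => τ (insert u C))
  have h2 : 2 ≤ signChanges (series n τ C) := by
    have h3 := sc_mono hmap
    rw [← hval] at h3
    rwa [sc_aba (fun h => hne (h.symm))] at h3
  have := row_le_one hτ hC hCd hy hyC
  omega

lemma mk_row_le_one {n : ℕ} {τ : Finset ℕ → Bool} {C : Finset ℕ}
    (hall : ∀ x y z : ℕ, x ∈ Finset.Icc 1 n → y ∈ Finset.Icc 1 n → z ∈ Finset.Icc 1 n →
      x ∉ C → y ∉ C → z ∉ C → x < y → y < z →
      τ (insert x C) = τ (insert z C) → τ (insert y C) = τ (insert x C)) :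
    signChanges (series n τ C) ≤ 1 := by
  by_contra hgt
  push_neg at hgt
  obtain ⟨a, hsl⟩ := sc_exists_aba hgt
  rw [series] at hsl
  obtain ⟨l', hl', heq⟩ := List.sublist_map_iff.mp hsl
  obtain ⟨x, y, z, rfl⟩ : ∃ x y z, l' = [x, y, z] := by
    have hlen : l'.length = 3 := by
      have := congrArg List.length heq
      simpa using this.symm
    match l', hlen with
    | [x, y, z], _ => exact ⟨x, y, z, rfl⟩
  have hpw : List.Pairwise (· < ·) [x, y, z] :=
    ((Finset.sortedLT_sort _).pairwise).sublist hl'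
  have hxy : x < y := by simp at hpw; tauto
  have hyz : y < z := by simp at hpw; tauto
  have hmem : ∀ u ∈ [x, y, z], u ∈ Finset.Icc 1 n ∧ u ∉ C := by
    intro u hu
    have := (Finset.mem_sort _).mp (hl'.mem hu)  -- wrong direction?
    exact Finset.mem_sdiff.mp this
  simp only [List.map_cons, List.map_nil] at heq
  have e1 : τ (insert x C) = a := by injection heq with h1 h2; exact h1.symm
  have e2 : τ (insert y C) = !a := by
    injection heq with h1 h2; injection h2 with h2 h3; exact h2.symm
  have e3 : τ (insert z C) = a := by
    injection heq with h1 h2; injection h2 with h2 h3; injection h3 with h3 _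
    exact h3.symm
  have hx := hmem x (by simp); have hy := hmem y (by simp); have hz := hmem z (by simp)
  have := hall x y z hx.1 hy.1 hz.1 hx.2 hy.2 hz.2 hxy hyz (by rw [e1, e3])
  rw [e1, e2] at this
  cases a <;> simp at this

def Lal (τ : Finset ℕ → Bool) (B : Finset ℕ) (b : ℕ) : Prop :=
  ∀ x, 1 ≤ x → x ≤ b → x ∉ B.erase b → τ (insert x (B.erase b)) = true
def Ral (n : ℕ) (τ : Finset ℕ → Bool) (B : Finset ℕ) (b : ℕ) : Prop :=
  ∀ x, b ≤ x → x ≤ n → x ∉ B.erase b → τ (insert x (B.erase b)) = true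

lemma mem_Icc_of_mem {n : ℕ} {B : Finset ℕ} (hB : B ⊆ Finset.Icc 1 n) {b : ℕ} (hb : b ∈ B) :
    1 ≤ b ∧ b ≤ n := by have := hB hb; simpa [Finset.mem_Icc] using this

lemma dichotomy {n d : ℕ} {τ : Finset ℕ → Bool} (hτ : IsCoSignotope n d τ) {B : Finset ℕ}
    (hB : B ⊆ Finset.Icc 1 n) (hBd : B.card = d) {b : ℕ} (hb : b ∈ B) (hτB : τ B = true) :
    Lal τ B b ∨ Ral n τ B b := by
  by_contra hcon
  push_neg at hcon
  obtain ⟨hnL, hnR⟩ := hcon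
  simp only [Lal, Ral, not_forall] at hnL hnR
  obtain ⟨x1, h11, h12, h13, h14⟩ := hnL
  obtain ⟨x2, h21, h22, h23, h24⟩ := hnR
  obtain ⟨hb1, hb2⟩ := mem_Icc_of_mem hB hb
  have hx1b : x1 ≠ b := by
    intro h; subst h; rw [Finset.insert_erase hb] at h14; exact h14 hτB
  have hx2b : x2 ≠ b := by
    intro h; subst h; rw [Finset.insert_erase hb] at h24; exact h24 hτB
  have hCs : B.erase b ⊆ Finset.Icc 1 n := fun z hz => hB (Finset.erase_subset _ _ hz)
  have hCc : (B.erase b).card + 1 = d := by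
    rw [Finset.card_erase_of_mem hb]; have : 1 ≤ B.card := Finset.card_pos.mpr ⟨b, hb⟩; omega
  have hbC : b ∉ B.erase b := Finset.notMem_erase _ _
  have := rowPattern hτ hCs hCc (x := x1) (y := b) (z := x2)
    (by simp [Finset.mem_Icc]; omega) (by simp [Finset.mem_Icc]; omega)
    (by simp [Finset.mem_Icc]; omega) h13 hbC h23
    (by omega) (by omega) ?_
  · rw [Finset.insert_erase hb] at this
    rw [this] at hτB
    rw [hτB] at h14
    exact h14 rfl
  · cases hv1 : τ (insert x1 (B.erase b)) <;> cases hv2 : τ (insert x2 (B.erase b)) <;>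
      simp_all

lemma support_finite {n d : ℕ} {τ : Finset ℕ → Bool} (hτ : IsCoSignotope n d τ) :
    {A : Finset ℕ | τ A = true}.Finite := by
  apply Set.Finite.subset (Finset.finite_toSet ((Finset.Icc 1 n).powerset))
  intro A hA
  simp only [Finset.coe_powerset, Set.mem_preimage, Set.mem_powerset_iff, Finset.coe_subset]
  exact (hτ.1 A hA).1

lemma plusCount_eq_card_s12 {n d : ℕ} {τ : Finset ℕ → Bool} (hτ : IsCoSignotope n d τ) :
    plusCount τ = (support_finite hτ).toFinset.card :=
  Set.ncard_eq_toFinset_card _ _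

lemma insert_inj_slot {C : Finset ℕ} {x x' : ℕ} (hx : x ∉ C) (hx' : x' ∉ C)
    (h : insert x C = insert x' C) : x = x' := by
  have : x ∈ insert x' C := h ▸ Finset.mem_insert_self x C
  rcases Finset.mem_insert.mp this with h' | h'
  · exact h'
  · exact absurd h' hx

section counting
variable {n d : ℕ} {τ : Finset ℕ → Bool}

-- the prefix family
lemma famL_facts (hτ : IsCoSignotope n d τ) {B : Finset ℕ} (hB : B ⊆ Finset.Icc 1 n) (hBd : B.card = d) {b : ℕ}
    (hb : b ∈ B) (hL : Lal τ B b) :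
    ∃ F : Finset (Finset ℕ), F ⊆ (support_finite hτ).toFinset ∧
      F.card + rk B b = b + 1 ∧
      ∀ A ∈ F, ∃ x, 1 ≤ x ∧ x ≤ b ∧ x ∉ B.erase b ∧ A = insert x (B.erase b) := by
  classical
  obtain ⟨hb1, hb2⟩ := mem_Icc_of_mem hB hb
  set C := B.erase b with hC
  set slots : Finset ℕ := Finset.Icc 1 b \ C with hslots
  refine ⟨slots.image (fun x => insert x C), ?_, ?_, ?_⟩
  · intro A hA
    simp only [Finset.mem_image] at hA
    obtain ⟨x, hx, rfl⟩ := hA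
    simp only [hslots, Finset.mem_sdiff, Finset.mem_Icc] at hx
    rw [Set.Finite.mem_toFinset]
    exact hL x hx.1.1 hx.1.2 hx.2
  · have hinj : Set.InjOn (fun x => insert x C) slots := by
      intro a ha a' ha' h
      simp only [hslots, Finset.coe_sdiff, Set.mem_diff, Finset.mem_coe] at ha ha'
      exact insert_inj_slot ha.2 ha'.2 h
    rw [Finset.card_image_of_injOn hinj]
    have e1 : slots.card + (Finset.Icc 1 b ∩ C).card = b := by
      have := Finset.card_sdiff_add_card_inter (Finset.Icc 1 b) C
      rwa [Nat.card_Icc, Nat.add_sub_cancel] at this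
    have e2 : Finset.Icc 1 b ∩ C = (B ∩ Finset.Icc 1 b).erase b := by
      ext z
      simp only [Finset.mem_inter, Finset.mem_erase, Finset.mem_Icc, hC]
      constructor
      · rintro ⟨⟨hz1, hz2⟩, hz3, hz4⟩; exact ⟨hz3, hz4, hz1, hz2⟩
      · rintro ⟨hz1, hz2, hz3, hz4⟩; exact ⟨⟨hz3, hz4⟩, hz1, hz2⟩
    have e3 : ((B ∩ Finset.Icc 1 b).erase b).card = rk B b - 1 := by
      rw [Finset.card_erase_of_mem (Finset.mem_inter.mpr ⟨hb, by simp [Finset.mem_Icc]; omega⟩)]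
      rfl
    have e4 : 1 ≤ rk B b := rk_pos hb hb1
    rw [e2, e3] at e1
    omega
  · intro A hA
    simp only [Finset.mem_image] at hA
    obtain ⟨x, hx, rfl⟩ := hA
    simp only [hslots, Finset.mem_sdiff, Finset.mem_Icc] at hx
    exact ⟨x, hx.1.1, hx.1.2, hx.2, rfl⟩

-- the suffix family
lemma famR_facts (hτ : IsCoSignotope n d τ) {B : Finset ℕ} (hB : B ⊆ Finset.Icc 1 n) (hBd : B.card = d) {b : ℕ}
    (hb : b ∈ B) (hR : Ral n τ B b) :
    ∃ F : Finset (Finset ℕ), F ⊆ (support_finite hτ).toFinset ∧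
      F.card + d = (n + 1 - b) + rk B b ∧
      ∀ A ∈ F, ∃ x, b ≤ x ∧ x ≤ n ∧ x ∉ B.erase b ∧ A = insert x (B.erase b) := by
  classical
  obtain ⟨hb1, hb2⟩ := mem_Icc_of_mem hB hb
  set C := B.erase b with hC
  set slots : Finset ℕ := Finset.Icc b n \ C with hslots
  refine ⟨slots.image (fun x => insert x C), ?_, ?_, ?_⟩
  · intro A hA
    simp only [Finset.mem_image] at hA
    obtain ⟨x, hx, rfl⟩ := hA
    simp only [hslots, Finset.mem_sdiff, Finset.mem_Icc] at hx
    rw [Set.Finite.mem_toFinset]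
    exact hR x hx.1.1 hx.1.2 hx.2
  · have hinj : Set.InjOn (fun x => insert x C) slots := by
      intro a ha a' ha' h
      simp only [hslots, Finset.coe_sdiff, Set.mem_diff, Finset.mem_coe] at ha ha'
      exact insert_inj_slot ha.2 ha'.2 h
    rw [Finset.card_image_of_injOn hinj]
    have e1 : slots.card + (Finset.Icc b n ∩ C).card = n + 1 - b := by
      have := Finset.card_sdiff_add_card_inter (Finset.Icc b n) C
      rwa [Nat.card_Icc] at this
    -- B splits as (B ∩ Icc 1 b) ∪ (C ∩ Icc b n)
    have e2 : rk B b + (C ∩ Finset.Icc b n).card = d := by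
      rw [← hBd]
      rw [rk]
      rw [← Finset.card_union_of_disjoint]
      · congr 1
        ext z
        simp only [Finset.mem_union, Finset.mem_inter, Finset.mem_Icc, hC, Finset.mem_erase]
        constructor
        · rintro (⟨hz1, _, hz3⟩ | ⟨⟨hz1, hz2⟩, _, hz4⟩) <;> assumption
        · intro hz
          obtain ⟨hz1, hz2⟩ := mem_Icc_of_mem hB hz
          rcases le_or_gt z b with h | h
          · exact Or.inl ⟨hz, hz1, h⟩
          · exact Or.inr ⟨⟨by omega, hz⟩, by omega, hz2⟩
      · rw [Finset.disjoint_left]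
        intro z hz1 hz2
        simp only [Finset.mem_inter, Finset.mem_Icc, hC, Finset.mem_erase] at hz1 hz2
        exact absurd (le_antisymm hz1.2.2 hz2.2.1) hz2.1.1
    have e3 : Finset.Icc b n ∩ C = C ∩ Finset.Icc b n := Finset.inter_comm _ _
    rw [e3] at e1
    omega
  · intro A hA
    simp only [Finset.mem_image] at hA
    obtain ⟨x, hx, rfl⟩ := hA
    simp only [hslots, Finset.mem_sdiff, Finset.mem_Icc] at hx
    exact ⟨x, hx.1.1, hx.1.2, hx.2, rfl⟩

lemma countL (hτ : IsCoSignotope n d τ) {B : Finset ℕ} (hB : B ⊆ Finset.Icc 1 n) (hBd : B.card = d) {b : ℕ}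
    (hb : b ∈ B) (hL : Lal τ B b) : b + 1 ≤ rk B b + plusCount τ := by
  obtain ⟨F, hsub, hcard, _⟩ := famL_facts hτ hB hBd hb hL
  have := Finset.card_le_card hsub
  rw [← plusCount_eq_card_s12 hτ] at this
  omega

lemma countR (hτ : IsCoSignotope n d τ) {B : Finset ℕ} (hB : B ⊆ Finset.Icc 1 n) (hBd : B.card = d) {b : ℕ}
    (hb : b ∈ B) (hR : Ral n τ B b) : n + rk B b + 1 ≤ b + d + plusCount τ := by
  obtain ⟨F, hsub, hcard, _⟩ := famR_facts hτ hB hBd hb hR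
  have h1 := Finset.card_le_card hsub
  rw [← plusCount_eq_card_s12 hτ] at h1
  obtain ⟨hb1, hb2⟩ := mem_Icc_of_mem hB hb
  omega

lemma twoFam (hτ : IsCoSignotope n d τ) (hd : d ≤ n) (hpc : plusCount τ + d ≤ n)
    {X Y : Finset ℕ} (hX : X ⊆ Finset.Icc 1 n) (hXd : X.card = d)
    (hY : Y ⊆ Finset.Icc 1 n) (hYd : Y.card = d) {b : ℕ}
    (hbX : b ∈ X) (hbY : b ∈ Y) (hrk : rk X b = rk Y b)
    (hL : Lal τ X b) (hR : Ral n τ Y b)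
    (hsep : (∃ s, b < s ∧ s ∈ Y.erase b ∧ s ∉ X.erase b) ∨
            (∃ s, s < b ∧ s ∈ X.erase b ∧ s ∉ Y.erase b)) : False := by
  classical
  obtain ⟨F1, hsub1, hcard1, hshape1⟩ := famL_facts hτ hX hXd hbX hL
  obtain ⟨F2, hsub2, hcard2, hshape2⟩ := famR_facts hτ hY hYd hbY hR
  have hdisj : Disjoint F1 F2 := by
    rw [Finset.disjoint_left]
    intro A hA1 hA2
    obtain ⟨x, hx1, hx2, hx3, rfl⟩ := hshape1 A hA1
    obtain ⟨x', hx1', hx2', hx3', heq⟩ := hshape2 _ hA2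
    rcases hsep with ⟨s, hs1, hs2, hs3⟩ | ⟨s, hs1, hs2, hs3⟩
    · have : s ∈ insert x' (Y.erase b) := Finset.mem_insert_of_mem hs2
      rw [← heq] at this
      rcases Finset.mem_insert.mp this with rfl | h
      · omega
      · exact hs3 h
    · have : s ∈ insert x (X.erase b) := Finset.mem_insert_of_mem hs2
      rw [heq] at this
      rcases Finset.mem_insert.mp this with rfl | h
      · omega
      · exact hs3 h
  have hunion : F1 ∪ F2 ⊆ (support_finite hτ).toFinset := Finset.union_subset hsub1 hsub2
  have hcu : (F1 ∪ F2).card = F1.card + F2.card := Finset.card_union_of_disjoint hdisj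
  have hle := Finset.card_le_card hunion
  rw [hcu] at hle
  rw [← plusCount_eq_card_s12 hτ] at hle
  obtain ⟨hb1, hb2⟩ := mem_Icc_of_mem hX hbX
  rw [← hrk] at hcard2
  have e4 : 1 ≤ rk X b := rk_pos hbX hb1
  have e5 : rk X b ≤ d := by have := rk_le_card X b; omega
  omega
end counting

def Qprop (n d i : ℕ) (τ : Finset ℕ → Bool) (X : Finset ℕ) : Prop :=
  τ X = true ∧ ∀ b ∈ X, (rk X b ≤ i → Lal τ X b) ∧ (i < rk X b → Ral n τ X b)

section step
variable {n d i : ℕ} {τ : Finset ℕ → Bool}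

lemma baseTransfer_L (hτ : IsCoSignotope n d τ) {C : Finset ℕ}
    (hC : C ⊆ Finset.Icc 1 n) (hCd : C.card + 1 = d) {u v : ℕ}
    (hu : u ∈ Finset.Icc 1 n) (hv : v ∈ Finset.Icc 1 n) (huC : u ∉ C) (hvC : v ∉ C)
    (hLu : ∀ t, 1 ≤ t → t ≤ u → t ∉ C → τ (insert t C) = true)
    (hτv : τ (insert v C) = true) :
    ∀ t, 1 ≤ t → t ≤ v → t ∉ C → τ (insert t C) = true := by
  intro t h1 h2 h3
  rcases le_or_gt t u with h | h
  · exact hLu t h1 h h3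
  · rcases eq_or_lt_of_le h2 with rfl | h4
    · exact hτv
    · have hu1 := Finset.mem_Icc.mp hu
      have hv1 := Finset.mem_Icc.mp hv
      have := rowPattern hτ hC hCd (x := u) (y := t) (z := v) hu
        (by simp [Finset.mem_Icc]; omega) hv huC h3 hvC h h4 (by rw [hτv, hLu u hu1.1 (le_refl _) huC])
      rw [this, hLu u hu1.1 (le_refl _) huC]

lemma baseTransfer_R (hτ : IsCoSignotope n d τ) {C : Finset ℕ}
    (hC : C ⊆ Finset.Icc 1 n) (hCd : C.card + 1 = d) {u v : ℕ}
    (hu : u ∈ Finset.Icc 1 n) (hv : v ∈ Finset.Icc 1 n) (huC : u ∉ C) (hvC : v ∉ C)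
    (hRu : ∀ t, u ≤ t → t ≤ n → t ∉ C → τ (insert t C) = true)
    (hτv : τ (insert v C) = true) :
    ∀ t, v ≤ t → t ≤ n → t ∉ C → τ (insert t C) = true := by
  intro t h2 h1 h3
  rcases le_or_gt u t with h | h
  · exact hRu t h h1 h3
  · rcases eq_or_lt_of_le h2 with rfl | h4
    · exact hτv
    · have hu1 := Finset.mem_Icc.mp hu
      have hv1 := Finset.mem_Icc.mp hv
      have := rowPattern hτ hC hCd (x := v) (y := t) (z := u) hv
        (by simp [Finset.mem_Icc]; omega) hu hvC h3 huC h4 h (by rw [hτv, hRu u (le_refl _) hu1.2 huC])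
      rw [this, hτv]

lemma stepQ (hτ : IsCoSignotope n d τ) (hdn : d ≤ n) (hpc : plusCount τ + d ≤ n)
    {X Y : Finset ℕ} (hQ : Qprop n d i τ X) (hτY : τ Y = true) (hGA : GAdj n d X Y) :
    Qprop n d i τ Y := by
  obtain ⟨hXs, hXd, hYs, hYd, x, hx, y, hyI, hyX, hYdef, hgap⟩ := hGA
  have hτX := hQ.1
  set C := X.erase x with hCdef
  have hxC : x ∉ C := Finset.notMem_erase _ _
  have hyC : y ∉ C := fun h => hyX (Finset.erase_subset _ _ h)
  have hxy : x ≠ y := fun h => hyX (h ▸ hx)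
  have hCY : Y.erase y = C := by rw [hYdef, Finset.erase_insert hyC]
  have hCX : insert x C = X := Finset.insert_erase hx
  have hCs : C ⊆ Finset.Icc 1 n := fun z hz => hXs (Finset.erase_subset _ _ hz)
  have hCc : C.card + 1 = d := by
    rw [hCdef, Finset.card_erase_of_mem hx]
    have : 1 ≤ X.card := Finset.card_pos.mpr ⟨x, hx⟩
    omega
  have hyY : y ∈ Y := hYdef ▸ Finset.mem_insert_self _ _
  -- gap trichotomy
  have htri : ∀ z ∈ C, (z < x ∧ z < y) ∨ (x < z ∧ y < z) := by
    intro z hz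
    have h1 := hgap z hz
    have h2 : z ≠ x := Finset.ne_of_mem_erase hz
    have h3 : z ≠ y := fun h => hyC (h ▸ hz)
    omega
  obtain ⟨hx1, hx2⟩ := mem_Icc_of_mem hXs hx
  obtain ⟨hy1, hy2⟩ := mem_Icc_of_mem (Finset.Icc_subset_Icc (le_refl _) (le_refl _)) hyI
  have hrk_eq : ∀ b ∈ C, rk Y b = rk X b := by
    intro b hb
    rcases htri b hb with ⟨h1, h2⟩ | ⟨h1, h2⟩
    · rw [rk, rk, ← hCX, hYdef,
        Finset.insert_inter_of_notMem (by simp [Finset.mem_Icc]; omega),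
        Finset.insert_inter_of_notMem (by simp [Finset.mem_Icc]; omega)]
    · rw [rk, rk, ← hCX, hYdef,
        Finset.insert_inter_of_mem (by simp [Finset.mem_Icc]; omega),
        Finset.insert_inter_of_mem (by simp [Finset.mem_Icc]; omega),
        Finset.card_insert_of_notMem (fun h => hyC (Finset.mem_of_mem_inter_left h)),
        Finset.card_insert_of_notMem (fun h => hxC (Finset.mem_of_mem_inter_left h))]
  have hrk_y : rk Y y = rk X x := by
    have hCeq : C ∩ Finset.Icc 1 y = C ∩ Finset.Icc 1 x := by
      ext z
      simp only [Finset.mem_inter, Finset.mem_Icc]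
      constructor
      · rintro ⟨hz, h1, h2⟩
        refine ⟨hz, h1, ?_⟩
        rcases htri z hz with h | h <;> omega
      · rintro ⟨hz, h1, h2⟩
        refine ⟨hz, h1, ?_⟩
        rcases htri z hz with h | h <;> omega
    rw [rk, rk, ← hCX, hYdef,
      Finset.insert_inter_of_mem (by simp [Finset.mem_Icc]; omega),
      Finset.insert_inter_of_mem (by simp [Finset.mem_Icc]; omega),
      Finset.card_insert_of_notMem (fun h => hyC (Finset.mem_of_mem_inter_left h)),
      Finset.card_insert_of_notMem (fun h => hxC (Finset.mem_of_mem_inter_left h)), hCeq]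
  refine ⟨hτY, ?_⟩
  intro b hb
  by_cases hby : b = y
  · subst hby
    rw [hrk_y]
    constructor
    · intro hle
      have hLx : Lal τ X x := (hQ.2 x hx).1 hle
      rw [Lal] at hLx ⊢
      rw [hCY]
      rw [← hCdef] at hLx
      exact baseTransfer_L hτ hCs hCc (by simp [Finset.mem_Icc]; omega) hyI hxC hyC hLx
        (by rw [← hYdef]; exact hτY)
    · intro hgt
      have hRx : Ral n τ X x := (hQ.2 x hx).2 hgt
      rw [Ral] at hRx ⊢
      rw [hCY]
      rw [← hCdef] at hRx
      exact baseTransfer_R hτ hCs hCc (by simp [Finset.mem_Icc]; omega) hyI hxC hyC hRx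
        (by rw [← hYdef]; exact hτY)
  · -- b ∈ C
    have hbC : b ∈ C := by
      rw [hYdef] at hb
      rcases Finset.mem_insert.mp hb with h | h
      · exact absurd h hby
      · exact h
    have hbX : b ∈ X := Finset.erase_subset _ _ hbC
    have hbx : b ≠ x := Finset.ne_of_mem_erase hbC
    have hρ : rk Y b = rk X b := hrk_eq b hbC
    have hbY : b ∈ Y := hb
    have hκρ : rk X x ≠ rk X b := by
      intro h
      rcases Nat.lt_trichotomy x b with hh | hh | hh
      · have := (rk_lt_iff hXs hx hbX).mp hh; omega
      · exact hbx hh.symm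
      · have := (rk_lt_iff hXs hbX hx).mp hh; omega
    constructor
    · intro hle
      rw [hρ] at hle
      have hLX : Lal τ X b := (hQ.2 b hbX).1 hle
      rcases dichotomy hτ hYs hYd hbY hτY with hgood | hbad
      · exact hgood
      · exfalso
        apply twoFam hτ hdn hpc hXs hXd hYs hYd hbX hbY hρ.symm hLX hbad
        rcases Nat.lt_or_ge (rk X x) (rk X b) with hc | hc
        · -- x < b ; separator s = x (right disjunct)
          right
          refine ⟨x, (rk_lt_iff hXs hx hbX).mpr hc,
            Finset.mem_erase.mpr ⟨Ne.symm hbx, hx⟩, ?_⟩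
          intro h
          have hxY : x ∈ Y := Finset.erase_subset _ _ h
          rw [hYdef] at hxY
          rcases Finset.mem_insert.mp hxY with h' | h'
          · exact hxy h'
          · exact hxC h' 
        · -- rk X x > rk X b : y > b ; separator s = y (left disjunct)
          have hc2 : rk X b < rk X x := by omega
          left
          have hyb : b < y := by
            have : rk Y b < rk Y y := by rw [hρ, hrk_y]; exact hc2
            exact (rk_lt_iff hYs hbY hyY).mpr this
          exact ⟨y, hyb, Finset.mem_erase.mpr ⟨by omega, hyY⟩,
            fun h => hyX (Finset.erase_subset _ _ h)⟩
    · intro hgt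
      rw [hρ] at hgt
      have hRX : Ral n τ X b := (hQ.2 b hbX).2 hgt
      rcases dichotomy hτ hYs hYd hbY hτY with hbad | hgood
      · exfalso
        apply twoFam hτ hdn hpc hYs hYd hXs hXd hbY hbX hρ hbad hRX
        rcases Nat.lt_or_ge (rk X x) (rk X b) with hc | hc
        · -- x < b, separator y < b (right disjunct of swapped roles)
          right
          have hyb : y < b := by
            have : rk Y y < rk Y b := by rw [hρ, hrk_y]; exact hc
            exact (rk_lt_iff hYs hyY hbY).mpr this
          exact ⟨y, hyb, Finset.mem_erase.mpr ⟨by omega, hyY⟩,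
            fun h => hyX (Finset.erase_subset _ _ h)⟩
        · have hc2 : rk X b < rk X x := by omega
          left
          refine ⟨x, (rk_lt_iff hXs hbX hx).mpr hc2,
            Finset.mem_erase.mpr ⟨Ne.symm hbx, hx⟩, ?_⟩
          intro h
          have hxY : x ∈ Y := Finset.erase_subset _ _ h
          rw [hYdef] at hxY
          rcases Finset.mem_insert.mp hxY with h' | h'
          · exact hxy h'
          · exact hxC h'
      · exact hgood
end step

section src
variable {n d i : ℕ} {τ : Finset ℕ → Bool}

lemma src_mem_iff (hdn : d < n) {b : ℕ} :
    b ∈ sourceSubset n d i ↔ (1 ≤ b ∧ b ≤ i) ∨ (n - d + i + 1 ≤ b ∧ b ≤ n) := by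
  simp [sourceSubset, Finset.mem_union, Finset.mem_Icc]

lemma src_sub (hdn : d < n) (hi : i ≤ d) : sourceSubset n d i ⊆ Finset.Icc 1 n := by
  intro b hb
  rw [src_mem_iff hdn] at hb
  simp only [Finset.mem_Icc]
  omega

lemma src_card (hdn : d < n) (hi : i ≤ d) : (sourceSubset n d i).card = d := by
  rw [sourceSubset, Finset.card_union_of_disjoint, Nat.card_Icc, Nat.card_Icc]
  · omega
  · rw [Finset.disjoint_left]
    intro z hz1 hz2
    simp only [Finset.mem_Icc] at hz1 hz2
    omega

lemma src_rk_bot (hdn : d < n) (hi : i ≤ d) {b : ℕ} (h1 : 1 ≤ b) (h2 : b ≤ i) :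
    rk (sourceSubset n d i) b = b := by
  have : sourceSubset n d i ∩ Finset.Icc 1 b = Finset.Icc 1 b := by
    ext z
    simp only [Finset.mem_inter, Finset.mem_Icc, src_mem_iff hdn]
    omega
  rw [rk, this, Nat.card_Icc]
  omega

lemma src_rk_top (hdn : d < n) (hi : i ≤ d) {b : ℕ} (h1 : n - d + i + 1 ≤ b) (h2 : b ≤ n) :
    rk (sourceSubset n d i) b + (n - d) = b := by
  have he : sourceSubset n d i ∩ Finset.Icc 1 b =
      Finset.Icc 1 i ∪ Finset.Icc (n - d + i + 1) b := by
    ext z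
    simp only [Finset.mem_inter, Finset.mem_union, Finset.mem_Icc, src_mem_iff hdn]
    omega
  rw [rk, he, Finset.card_union_of_disjoint, Nat.card_Icc, Nat.card_Icc]
  · omega
  · rw [Finset.disjoint_left]
    intro z hz1 hz2
    simp only [Finset.mem_Icc] at hz1 hz2
    omega

lemma srcQ (hτ : IsCoSignotope n d τ) (hdn : d < n) (hi : i ≤ d)
    (hτS : τ (sourceSubset n d i) = true) : Qprop n d i τ (sourceSubset n d i) := by
  refine ⟨hτS, ?_⟩
  intro b hb
  set S := sourceSubset n d i with hS
  rcases (src_mem_iff hdn).mp hb with ⟨h1, h2⟩ | ⟨h1, h2⟩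
  · -- bottom block
    have hrk : rk S b = b := src_rk_bot hdn hi h1 h2
    constructor
    · intro _
      intro t ht1 ht2 ht3
      rcases eq_or_lt_of_le ht2 with rfl | hlt
      · rw [Finset.insert_erase hb]; exact hτS
      · exfalso
        apply ht3
        refine Finset.mem_erase.mpr ⟨by omega, ?_⟩
        rw [src_mem_iff hdn]
        omega
    · intro hgt
      rw [hrk] at hgt
      omega
  · -- top block
    have hrk : rk S b + (n - d) = b := src_rk_top hdn hi h1 h2
    constructor
    · intro hle
      omega
    · intro _
      intro t ht1 ht2 ht3
      rcases eq_or_lt_of_le ht1 with rfl | hlt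
      · rw [Finset.insert_erase hb]; exact hτS
      · exfalso
        apply ht3
        refine Finset.mem_erase.mpr ⟨by omega, ?_⟩
        rw [src_mem_iff hdn]
        omega

lemma mainQ (hτ : IsCoSignotope n d τ) (hdn : d < n) (hpc : plusCount τ + d ≤ n)
    (hi : i ≤ d) (hconn : ∀ B, τ B = true → B ∈ comp n d τ i) :
    ∀ B, τ B = true → Qprop n d i τ B := by
  intro B hB
  obtain ⟨hS, hB', hpath⟩ := hconn B hB
  clear hB hB'
  induction hpath with
  | refl => exact srcQ hτ hdn hi hS
  | tail hsteps hstep ih => exact stepQ hτ (le_of_lt hdn) hpc ih hstep.2.1 hstep.2.2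
end src

lemma dev {n d i : ℕ} {τ : Finset ℕ → Bool} (hτ : IsCoSignotope n d τ) (hdn : d < n)
    (hpc : plusCount τ + d ≤ n) (hi : i ≤ d)
    (hconn : ∀ B, τ B = true → B ∈ comp n d τ i) :
    ∀ B, τ B = true → ∀ b ∈ B,
      (rk B b ≤ i → b + 1 ≤ rk B b + plusCount τ) ∧
      (i < rk B b → n + rk B b + 1 ≤ b + d + plusCount τ) := by
  intro B hB b hb
  obtain ⟨hBs, hBd⟩ := hτ.1 B hB
  have hQ := mainQ hτ hdn hpc hi hconn B hB
  constructor
  · intro hle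
    exact countL hτ hBs hBd hb ((hQ.2 b hb).1 hle)
  · intro hgt
    exact countR hτ hBs hBd hb ((hQ.2 b hb).2 hgt)

lemma noShare {n d : ℕ} {τ1 τ2 : Finset ℕ → Bool} {i1 i2 : ℕ} (hdn : d < n)
    (h1 : IsCoSignotope n d τ1) (h2 : IsCoSignotope n d τ2)
    (hsum : plusCount τ1 + plusCount τ2 + d ≤ n)
    (hi1 : i1 ≤ d) (hi2 : i2 ≤ d) (hii : i2 + 2 ≤ i1)
    (hconn1 : ∀ B, τ1 B = true → B ∈ comp n d τ1 i1)
    (hconn2 : ∀ B, τ2 B = true → B ∈ comp n d τ2 i2)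
    {D : Finset ℕ} {u w : ℕ} (hu : u ∉ D) (hw : w ∉ D)
    (hA : τ1 (insert u D) = true) (hA' : τ2 (insert w D) = true) : False := by
  classical
  set A := insert u D with hAdef
  set A' := insert w D with hA'def
  obtain ⟨hAs, hAd⟩ := h1.1 _ hA
  obtain ⟨hA's, hA'd⟩ := h2.1 _ hA'
  have hpc1 : plusCount τ1 + d ≤ n := by omega
  have hpc2 : plusCount τ2 + d ≤ n := by omega
  have dev1 := dev h1 hdn hpc1 hi1 hconn1 _ hA
  have dev2 := dev h2 hdn hpc2 hi2 hconn2 _ hA'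
  have hDA : D ⊆ A := Finset.subset_insert _ _
  have hDA' : D ⊆ A' := Finset.subset_insert _ _
  -- key rank transfer
  have hkey : ∀ t ∈ D, rk A t ≤ i1 → rk A' t ≤ i2 := by
    intro t ht hle
    by_contra hgt
    push_neg at hgt
    have k1 := (dev1 t (hDA ht)).1 hle
    have k2 := (dev2 t (hDA' ht)).2 hgt
    have k3 : rk A t ≤ rk A' t + 1 := by
      have hsub : A ∩ Finset.Icc 1 t ⊆ insert u (A' ∩ Finset.Icc 1 t) := by
        intro z hz
        obtain ⟨hz1, hz2⟩ := Finset.mem_inter.mp hz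
        rcases Finset.mem_insert.mp hz1 with rfl | hz3
        · exact Finset.mem_insert_self _ _
        · exact Finset.mem_insert_of_mem (Finset.mem_inter.mpr ⟨hDA' hz3, hz2⟩)
      calc rk A t ≤ (insert u (A' ∩ Finset.Icc 1 t)).card := Finset.card_le_card hsub
        _ ≤ rk A' t + 1 := Finset.card_insert_le _ _
    omega
  -- counting
  have hfilt : (A.filter (fun t => rk A t ≤ i1)).card = i1 :=
    rk_filter_card hAs (by omega)
  set T := (A.filter (fun t => rk A t ≤ i1)).erase u with hT
  have hTD : T ⊆ D := by
    intro t ht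
    obtain ⟨ht1, ht2⟩ := Finset.mem_erase.mp ht
    have := (Finset.mem_filter.mp ht2).1
    rcases Finset.mem_insert.mp this with rfl | h
    · exact absurd rfl ht1
    · exact h
  have hTcard : i1 - 1 ≤ T.card := by
    have h := Finset.pred_card_le_card_erase (s := A.filter (fun t => rk A t ≤ i1)) (a := u)
    rw [hT]
    omega
  have himg : T.image (rk A') ⊆ Finset.Icc 1 i2 := by
    intro j hj
    obtain ⟨t, ht, rfl⟩ := Finset.mem_image.mp hj
    have htD := hTD ht
    have h1t : rk A' t ≤ i2 := by
      apply hkey t htD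
      exact (Finset.mem_filter.mp (Finset.mem_erase.mp ht).2).2
    have h2t : 1 ≤ rk A' t :=
      rk_pos (hDA' htD) (mem_Icc_of_mem hA's (hDA' htD)).1
    simp only [Finset.mem_Icc]
    omega
  have hinj : Set.InjOn (rk A') T := by
    apply (rk_injOn hA's).mono
    intro t ht
    simp only [Finset.mem_coe] at ht ⊢
    exact hDA' (hTD ht)
  have hcard := Finset.card_le_card himg
  rw [Finset.card_image_of_injOn hinj, Nat.card_Icc] at hcard
  omega

lemma srcNotMem {n d : ℕ} {τ2 : Finset ℕ → Bool} {i1 i2 : ℕ} (hdn : d < n)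
    (h2 : IsCoSignotope n d τ2) (hpc2 : plusCount τ2 + d ≤ n)
    (hi1 : i1 ≤ d) (hi2 : i2 ≤ d) (hne : i1 ≠ i2)
    (hconn2 : ∀ B, τ2 B = true → B ∈ comp n d τ2 i2)
    (hS : τ2 (sourceSubset n d i1) = true) : False := by
  have dev2 := dev h2 hdn hpc2 hi2 hconn2 _ hS
  rcases Nat.lt_or_ge i2 i1 with hlt | hge
  · -- b := i2 + 1 in bottom block of S_{i1}
    have hb : (i2 + 1) ∈ sourceSubset n d i1 := by rw [src_mem_iff hdn]; omega
    have hrk : rk (sourceSubset n d i1) (i2 + 1) = i2 + 1 :=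
      src_rk_bot hdn hi1 (by omega) (by omega)
    have := (dev2 _ hb).2 (by omega)
    rw [hrk] at this
    omega
  · have hlt : i1 < i2 := by omega
    have hb : (n - d + i1 + 1) ∈ sourceSubset n d i1 := by rw [src_mem_iff hdn]; omega
    have hrk : rk (sourceSubset n d i1) (n - d + i1 + 1) + (n - d) = n - d + i1 + 1 :=
      src_rk_top hdn hi1 (le_refl _) (by omega)
    have := (dev2 _ hb).1 (by omega)
    omega

-- ============ final assembly ============
section assembly

lemma ofPlusSet_iff (S : Set (Finset ℕ)) (A : Finset ℕ) :
    ofPlusSet S A = true ↔ A ∈ S := by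
  unfold ofPlusSet
  split <;> simp_all

lemma ofPlusSet_indicator {τ : Finset ℕ → Bool} :
    ofPlusSet {A | τ A = true} = τ := by
  funext A
  by_cases h : τ A = true
  · rw [h]
    exact (ofPlusSet_iff _ _).mpr h
  · have h' : τ A = false := by simpa using h
    rw [h', Bool.eq_false_iff]
    intro hcon
    exact h ((ofPlusSet_iff _ _).mp hcon)
end assembly

/-- **Lemma.** For every sparse composition `(c_0, …, c_d)` of `p ≤ n - d` and all
co-signotopes `τ_i ∈ 𝒮̄_{c_i,i}(n,d)`, there is a unique `τ ∈ 𝒮̄_p(n,d)` whose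
p-sequence is `(c_0, …, c_d)` and whose `+`-component decomposition is
`Δ(τ) = (τ_0, …, τ_d)`. -/
theorem statement12 (n d p : ℕ) (hdn : d < n) (hp : p + d ≤ n)
    (c : Fin (d + 1) → ℕ) (hc : IsSparseComposition d p c)
    (τs : Fin (d + 1) → Finset ℕ → Bool)
    (hτs : ∀ i : Fin (d + 1), τs i ∈ coSigOnly n d (c i) (i : ℕ)) :
    ∃! τ : Finset ℕ → Bool, τ ∈ coSigSet n d p ∧
      (∀ i : Fin (d + 1), (comp n d τ (i : ℕ)).ncard = c i) ∧
      (∀ i : Fin (d + 1), compFun n d τ (i : ℕ) = τs i) := by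
  classical
  have hcos : ∀ m : Fin (d+1), IsCoSignotope n d (τs m) := fun m => (hτs m).1
  have hpcm : ∀ m : Fin (d+1), plusCount (τs m) = c m := fun m => (hτs m).2.1
  have hconn : ∀ m : Fin (d+1), ∀ B, τs m B = true → B ∈ comp n d (τs m) (m:ℕ) :=
    fun m => (hτs m).2.2
  have hmd : ∀ m : Fin (d+1), (m:ℕ) ≤ d := fun m => Nat.lt_succ_iff.mp m.isLt
  have hone : ∀ m : Fin (d+1), c m ≤ p := by
    intro m
    rw [← hc.1]
    exact Finset.single_le_sum (fun _ _ => Nat.zero_le _) (Finset.mem_univ m)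
  have hpairc : ∀ m m' : Fin (d+1), m ≠ m' → c m + c m' ≤ p := by
    intro m m' hne
    rw [← hc.1]
    have he : ∑ x ∈ ({m, m'} : Finset (Fin (d+1))), c x = c m + c m' := Finset.sum_pair hne
    rw [← he]
    exact Finset.sum_le_sum_of_subset (Finset.subset_univ _)
  have hsparse : ∀ m m' : Fin (d+1), (m':ℕ) + 1 = (m:ℕ) → c m = 0 ∨ c m' = 0 := by
    intro m m' h
    have h1 : 1 ≤ (m:ℕ) := by omega
    rcases hc.2 m h1 with h2 | h2
    · exact Or.inl h2
    · right
      have he : (⟨(m:ℕ) - 1, lt_of_le_of_lt (Nat.sub_le _ _) m.isLt⟩ : Fin (d+1)) = m' :=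
        Fin.val_injective (by simp; omega)
      rwa [he] at h2
  have hfin : ∀ m : Fin (d+1), {A | τs m A = true}.Finite := fun m => support_finite (hcos m)
  have hposU : ∀ m : Fin (d+1), ∀ A, τs m A = true → 1 ≤ c m := by
    intro m A hA
    rw [← hpcm m]
    have h0 : 0 < plusCount (τs m) := by
      rw [plusCount]
      exact (Set.ncard_pos (hfin m)).mpr ⟨A, hA⟩
    omega
  have hNS : ∀ m m' : Fin (d+1), m ≠ m' → ∀ (D : Finset ℕ) (u w : ℕ), u ∉ D → w ∉ D →
      τs m (insert u D) = true → τs m' (insert w D) = true → False := by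
    intro m m' hne D u w hu hw hA hA'
    have hm1 := hposU m _ hA
    have hm1' := hposU m' _ hA'
    have hvne : (m:ℕ) ≠ (m':ℕ) := fun h => hne (Fin.val_injective h)
    rcases Nat.lt_or_ge (m:ℕ) (m':ℕ) with hlt | hge
    · rcases Nat.lt_or_ge ((m:ℕ)+1) (m':ℕ) with h2 | h2
      · refine noShare (τ1 := τs m') (τ2 := τs m) hdn (hcos m') (hcos m) ?_ (hmd m') (hmd m)
          (by omega) (hconn m') (hconn m) hw hu hA' hA
        rw [hpcm, hpcm]
        have := hpairc m m' hne
        omega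
      · have h3 : (m:ℕ) + 1 = (m':ℕ) := by omega
        rcases hsparse m' m h3 with h | h <;> omega
    · rcases Nat.lt_or_ge ((m':ℕ)+1) (m:ℕ) with h2 | h2
      · refine noShare (τ1 := τs m) (τ2 := τs m') hdn (hcos m) (hcos m') ?_ (hmd m) (hmd m')
          (by omega) (hconn m) (hconn m') hu hw hA hA'
        rw [hpcm, hpcm]
        have := hpairc m m' hne
        omega
      · have h3 : (m':ℕ) + 1 = (m:ℕ) := by omega
        rcases hsparse m m' h3 with h | h <;> omega
  have hsrc : ∀ m : Fin (d+1), c m ≠ 0 → τs m (sourceSubset n d (m:ℕ)) = true := by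
    intro m h0
    have hne : {A | τs m A = true}.Nonempty := by
      apply Set.nonempty_of_ncard_ne_zero
      rw [← plusCount, hpcm]
      exact h0
    obtain ⟨A, hA⟩ := hne
    exact (hconn m A hA).1
  have hsrcOnly : ∀ m m' : Fin (d+1), τs m' (sourceSubset n d (m:ℕ)) = true → m' = m := by
    intro m m' hS
    by_contra hne
    have hvne : (m:ℕ) ≠ (m':ℕ) := fun h => hne (Fin.val_injective h.symm)
    refine srcNotMem (i1 := (m:ℕ)) (i2 := (m':ℕ)) hdn (hcos m') ?_ (hmd m) (hmd m') hvne
      (hconn m') hS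
    rw [hpcm]
    have := hone m'
    omega
  -- the union sign function
  set τu : Finset ℕ → Bool := ofPlusSet {A | ∃ m : Fin (d+1), τs m A = true} with hτu
  have hUiff : ∀ A, τu A = true ↔ ∃ m : Fin (d+1), τs m A = true := by
    intro A
    rw [hτu, ofPlusSet_iff]
    rfl
  -- τu is a co-signotope
  have hcosU : IsCoSignotope n d τu := by
    constructor
    · intro A hA
      obtain ⟨m, hm⟩ := (hUiff A).mp hA
      exact (hcos m).1 A hm
    · intro B hBs hBd b hb
      have hCs : B.erase b ⊆ Finset.Icc 1 n := fun z hz => hBs (Finset.erase_subset _ _ hz)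
      have hCc : (B.erase b).card + 1 = d := by
        rw [Finset.card_erase_of_mem hb]
        have : 1 ≤ B.card := Finset.card_pos.mpr ⟨b, hb⟩
        omega
      apply mk_row_le_one
      intro x y z hxI hyI hzI hxC hyC hzC hxy hyz hval
      cases hvx : τu (insert x (B.erase b)) with
      | true =>
        rw [hvx] at hval
        obtain ⟨m, hm⟩ := (hUiff _).mp hvx
        obtain ⟨m', hm'⟩ := (hUiff _).mp hval.symm
        by_cases hmm : m = m'
        · subst hmm
          have hv : τs m (insert x (B.erase b)) = τs m (insert z (B.erase b)) := by
            rw [hm, hm']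
          have hmid := rowPattern (hcos m) hCs hCc hxI hyI hzI hxC hyC hzC hxy hyz hv
          rw [hm] at hmid
          exact (hUiff _).mpr ⟨m, hmid⟩
        · exact (hNS m m' hmm (B.erase b) x z hxC hzC hm hm').elim
      | false =>
        rw [hvx] at hval
        by_contra hyT
        have hyT' : τu (insert y (B.erase b)) = true := by
          cases h : τu (insert y (B.erase b))
          · exact absurd h hyT
          · rfl
        obtain ⟨k, hk⟩ := (hUiff _).mp hyT'
        have hxk : τs k (insert x (B.erase b)) = false := by
          cases h : τs k (insert x (B.erase b))
          · rfl
          · have := (hUiff _).mpr ⟨k, h⟩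
            rw [hvx] at this
            exact absurd this (by simp)
        have hzk : τs k (insert z (B.erase b)) = false := by
          cases h : τs k (insert z (B.erase b))
          · rfl
          · have := (hUiff _).mpr ⟨k, h⟩
            rw [← hval] at this
            exact absurd this (by simp)
        have hmid := rowPattern (hcos k) hCs hCc hxI hyI hzI hxC hyC hzC hxy hyz
          (by rw [hxk, hzk])
        rw [hxk, hk] at hmid
        exact absurd hmid (by simp)
  -- the support of τu as a finset
  set F : Finset (Finset ℕ) :=
    Finset.univ.biUnion (fun m : Fin (d+1) => (hfin m).toFinset) with hF
  have hmemF : ∀ A, A ∈ F ↔ ∃ m : Fin (d+1), τs m A = true := by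
    intro A
    rw [hF, Finset.mem_biUnion]
    constructor
    · rintro ⟨m, _, hm⟩
      exact ⟨m, (Set.Finite.mem_toFinset (hfin m)).mp hm⟩
    · rintro ⟨m, hm⟩
      exact ⟨m, Finset.mem_univ _, (Set.Finite.mem_toFinset (hfin m)).mpr hm⟩
  have hsetF : {A | τu A = true} = (↑F : Set (Finset ℕ)) := by
    ext A
    rw [Set.mem_setOf_eq, hUiff A, Finset.mem_coe, hmemF]
  have hcardF : F.card = p := by
    rw [hF, Finset.card_biUnion]
    · rw [← hc.1]
      apply Finset.sum_congr rfl
      intro m _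
      rw [← hpcm m, plusCount_eq_card_s12 (hcos m)]
    · intro m _ m' _ hne
      rw [Function.onFun, Finset.disjoint_left]
      intro A hAm hAm'
      rw [Set.Finite.mem_toFinset] at hAm hAm'
      have hAd : A.card = d := ((hcos m).1 A hAm).2
      rcases Nat.eq_zero_or_pos d with hd0 | hd0
      · apply hne
        apply Fin.val_injective
        have := hmd m
        have := hmd m'
        omega
      · have hAne : A.Nonempty := Finset.card_pos.mp (by omega)
        obtain ⟨a, ha⟩ := hAne
        refine hNS m m' hne (A.erase a) a a (Finset.notMem_erase _ _)
          (Finset.notMem_erase _ _) ?_ ?_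
        · rwa [Finset.insert_erase ha]
        · rwa [Finset.insert_erase ha]
  have hpcU : plusCount τu = p := by
    rw [plusCount, hsetF, Set.ncard_coe_finset, hcardF]
  -- components of τu
  have hcompU : ∀ m : Fin (d+1), comp n d τu (m:ℕ) = {A | τs m A = true} := by
    intro m
    ext A
    constructor
    · rintro ⟨hS, hA, hpath⟩
      obtain ⟨m'', hm''⟩ := (hUiff _).mp hS
      have hmm : m'' = m := hsrcOnly m m'' hm''
      subst hmm
      clear hA hS
      show τs m'' A = true
      induction hpath with
      | refl => exact hm''
      | tail hsteps hstep ih =>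
        rename_i Xp Yp
        obtain ⟨hpX, hpY, hGA⟩ := hstep
        obtain ⟨hXs, hXd, hYs, hYd, x, hx, y, hyI, hyX, hYdef, hgap⟩ := hGA
        obtain ⟨k, hk⟩ := (hUiff _).mp hpY
        by_cases hkm : k = m''
        · rw [← hkm]; exact hk
        · exfalso
          refine hNS m'' k (fun h => hkm h.symm) (Xp.erase x) x y
            (Finset.notMem_erase _ _) (fun h => hyX (Finset.erase_subset _ _ h)) ?_ ?_
          · rw [Finset.insert_erase hx]
            exact ih
          · rw [← hYdef]
            exact hk
    · intro hA
      have h1 := hposU m A hA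
      refine ⟨(hUiff _).mpr ⟨m, hsrc m (by omega)⟩, (hUiff _).mpr ⟨m, hA⟩, ?_⟩
      exact Relation.ReflTransGen.mono
        (by intro X Y h; exact ⟨(hUiff _).mpr ⟨m, h.1⟩, (hUiff _).mpr ⟨m, h.2.1⟩, h.2.2⟩) _ _
        ((hconn m A hA).2.2)
  -- conclude
  refine ⟨τu, ⟨⟨hcosU, hpcU⟩, ?_, ?_⟩, ?_⟩
  · intro m
    rw [hcompU m]
    exact hpcm m
  · intro m
    rw [compFun, hcompU m]
    exact ofPlusSet_indicator
  · rintro τ' ⟨⟨hcos', hpc'⟩, hcard', hfun'⟩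
    have hcompeq : ∀ m : Fin (d+1), comp n d τ' (m:ℕ) = {A | τs m A = true} := by
      intro m
      ext A
      rw [← ofPlusSet_iff (comp n d τ' (m:ℕ)) A]
      have : ofPlusSet (comp n d τ' (m:ℕ)) = τs m := hfun' m
      rw [this]
      rfl
    have hsub : (↑F : Set (Finset ℕ)) ⊆ {A | τ' A = true} := by
      intro A hA
      obtain ⟨m, hm⟩ := (hmemF A).mp hA
      have : A ∈ comp n d τ' (m:ℕ) := by rw [hcompeq m]; exact hm
      exact this.2.1
    have hfin' : {A | τ' A = true}.Finite := support_finite hcos'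
    have heqset : (↑F : Set (Finset ℕ)) = {A | τ' A = true} := by
      apply Set.eq_of_subset_of_ncard_le hsub _ hfin'
      rw [Set.ncard_coe_finset, hcardF]
      rw [← plusCount, hpc']
    funext A
    have h1 : τ' A = true ↔ τu A = true := by
      rw [hUiff A, ← hmemF, ← Finset.mem_coe, heqset]
      rfl
    by_cases h : τu A = true
    · rw [h, h1.mpr h]
    · have hA : τu A = false := by simpa using h
      have hA' : τ' A = false := by
        cases h3 : τ' A
        · rfl
        · exact absurd (h1.mp h3) h
      rw [hA, hA']
end
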